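/- arXiv:1610.07415 — 5 statements merged into one kernel-verified Lean document; each statement's English description precedes it below -/
import Mathlib

section
/- The variational functional F attains its supremum over [0,∞): the set 𝔑 := { r ≥ 0 : F(r) = sup_{r' ≥ 0} F(r') } of maximizers is nonempty and compact, and in particular sup_{r ≥ 0} F(r) is finite. -/
open Real Filter

/-- `g_{r,x} := sqrt((x + λ_s − μ_s)² + γ_s²·r)`. -/
noncomputable def gg (gams lams mus r x : ℝ) : ℝ :=
  Real.sqrt ((x + lams - mus) ^ 2 + gams ^ 2 * r)

/-- The function `f` from Theorem 1 of the paper. Parameters: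
`beta` = β, `gams` = γ_s, `lams` = λ_s, `lamf` = λ_f, `lam` = λ,
`mus` = μ_s, `muf` = μ_f, `hs` = h_s, `hf` = h_f, `eta` = η. -/
noncomputable def ff (beta gams lams lamf lam mus muf hs hf eta r : ℝ) : ℝ :=
  (Real.exp (-(beta * muf)) + Real.exp (-(beta * (4 * lam + 2 * lamf - muf))))
      * Real.cosh (beta * hs)
    + Real.exp (-(beta * (2 * lam - hs))) * Real.cosh (beta * (eta + hf))
    + Real.exp (-(beta * (2 * lam + hs))) * Real.cosh (beta * (eta - hf))
    + Real.exp (-(beta * (lams + muf))) * Real.cosh (beta * gg gams lams mus r 0)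
    + Real.exp (-(beta * (4 * lam + lams + 2 * lamf - muf)))
      * Real.cosh (beta * gg gams lams mus r (4 * lam))
    + 2 * Real.exp (-(beta * (2 * lam + lams))) * Real.cosh (beta * hf)
      * Real.cosh (beta * gg gams lams mus r (2 * lam))

/-- The variational functional `F(r) := −γ_s·r + β⁻¹·ln f(r)`. -/
noncomputable def FF (beta gams lams lamf lam mus muf hs hf eta r : ℝ) : ℝ :=
  -(gams * r) + beta⁻¹ * Real.log (ff beta gams lams lamf lam mus muf hs hf eta r)

lemma cosh_le_exp_aux {x : ℝ} (hx : 0 ≤ x) : Real.cosh x ≤ Real.exp x := by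
  rw [Real.cosh_eq]
  have h : Real.exp (-x) ≤ Real.exp x := Real.exp_le_exp.mpr (by linarith)
  linarith

lemma gg_le_aux {gams : ℝ} (lams mus x : ℝ) (hg : 0 ≤ gams) {r : ℝ} (hr : 0 ≤ r) :
    gg gams lams mus r x ≤ |x + lams - mus| + gams * Real.sqrt r := by
  unfold gg
  have hs : Real.sqrt r ^ 2 = r := Real.sq_sqrt hr
  have h1 : (x + lams - mus) ^ 2 + gams ^ 2 * r ≤ (|x + lams - mus| + gams * Real.sqrt r) ^ 2 := by
    have ha : 0 ≤ |x + lams - mus| := abs_nonneg _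
    have hsr : 0 ≤ Real.sqrt r := Real.sqrt_nonneg r
    have hab : |x + lams - mus| ^ 2 = (x + lams - mus) ^ 2 := sq_abs _
    nlinarith [mul_nonneg (mul_nonneg hg hsr) ha]
  calc Real.sqrt ((x + lams - mus) ^ 2 + gams ^ 2 * r)
      ≤ Real.sqrt ((|x + lams - mus| + gams * Real.sqrt r) ^ 2) := Real.sqrt_le_sqrt h1
    _ = |x + lams - mus| + gams * Real.sqrt r := by
        rw [Real.sqrt_sq (by positivity)]

lemma ff_pos (beta gams lams lamf lam mus muf hs hf eta r : ℝ) :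
    0 < ff beta gams lams lamf lam mus muf hs hf eta r := by
  unfold ff
  have := Real.cosh_pos (x := beta * hs)
  have := Real.cosh_pos (x := beta * (eta + hf))
  have := Real.cosh_pos (x := beta * (eta - hf))
  have := Real.cosh_pos (x := beta * gg gams lams mus r 0)
  have := Real.cosh_pos (x := beta * gg gams lams mus r (4 * lam))
  have := Real.cosh_pos (x := beta * gg gams lams mus r (2 * lam))
  have := Real.cosh_pos (x := beta * hf)
  positivity

lemma ff_continuous (beta gams lams lamf lam mus muf hs hf eta : ℝ) :
    Continuous (fun r => ff beta gams lams lamf lam mus muf hs hf eta r) := by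
  unfold ff gg
  fun_prop

lemma FF_continuous (beta gams lams lamf lam mus muf hs hf eta : ℝ) :
    Continuous (fun r => FF beta gams lams lamf lam mus muf hs hf eta r) := by
  unfold FF
  have h1 : Continuous (fun r => ff beta gams lams lamf lam mus muf hs hf eta r) :=
    ff_continuous _ _ _ _ _ _ _ _ _ _
  have h2 : Continuous fun r => Real.log (ff beta gams lams lamf lam mus muf hs hf eta r) :=
    h1.log (fun x => (ff_pos _ _ _ _ _ _ _ _ _ _ x).ne')
  fun_prop

/-- The explicit constant bounding `f(r) ≤ C · exp(β γ √r)`. -/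
noncomputable def CC (beta gams lams lamf lam mus muf hs hf eta : ℝ) : ℝ :=
  (Real.exp (-(beta * muf)) + Real.exp (-(beta * (4 * lam + 2 * lamf - muf))))
      * Real.cosh (beta * hs)
    + Real.exp (-(beta * (2 * lam - hs))) * Real.cosh (beta * (eta + hf))
    + Real.exp (-(beta * (2 * lam + hs))) * Real.cosh (beta * (eta - hf))
    + Real.exp (-(beta * (lams + muf))) * Real.exp (beta * |0 + lams - mus|)
    + Real.exp (-(beta * (4 * lam + lams + 2 * lamf - muf)))
      * Real.exp (beta * |4 * lam + lams - mus|)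
    + 2 * Real.exp (-(beta * (2 * lam + lams))) * Real.cosh (beta * hf)
      * Real.exp (beta * |2 * lam + lams - mus|)

lemma CC_pos (beta gams lams lamf lam mus muf hs hf eta : ℝ) :
    0 < CC beta gams lams lamf lam mus muf hs hf eta := by
  unfold CC
  have := Real.cosh_pos (x := beta * hs)
  have := Real.cosh_pos (x := beta * (eta + hf))
  have := Real.cosh_pos (x := beta * (eta - hf))
  have := Real.cosh_pos (x := beta * hf)
  positivity

lemma ff_le (beta gams lams lamf lam mus muf hs hf eta : ℝ) (hbeta : 0 < beta)
    (hgams : 0 < gams) {r : ℝ} (hr : 0 ≤ r) :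
    ff beta gams lams lamf lam mus muf hs hf eta r ≤
      CC beta gams lams lamf lam mus muf hs hf eta * Real.exp (beta * gams * Real.sqrt r) := by
  have hE1 : (1 : ℝ) ≤ Real.exp (beta * gams * Real.sqrt r) :=
    Real.one_le_exp (by positivity)
  have hkey : ∀ x : ℝ, Real.cosh (beta * gg gams lams mus r x) ≤
      Real.exp (beta * |x + lams - mus|) * Real.exp (beta * gams * Real.sqrt r) := by
    intro x
    have hgg0 : 0 ≤ gg gams lams mus r x := Real.sqrt_nonneg _
    have h1 : Real.cosh (beta * gg gams lams mus r x) ≤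
        Real.exp (beta * gg gams lams mus r x) :=
      cosh_le_exp_aux (by positivity)
    have h2 : beta * gg gams lams mus r x ≤
        beta * (|x + lams - mus| + gams * Real.sqrt r) := by
      exact mul_le_mul_of_nonneg_left (gg_le_aux lams mus x hgams.le hr) hbeta.le
    calc Real.cosh (beta * gg gams lams mus r x) ≤ Real.exp (beta * gg gams lams mus r x) := h1
      _ ≤ Real.exp (beta * (|x + lams - mus| + gams * Real.sqrt r)) := Real.exp_le_exp.mpr h2
      _ = Real.exp (beta * |x + lams - mus|) * Real.exp (beta * gams * Real.sqrt r) := by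
          rw [← Real.exp_add]; ring_nf
  unfold ff CC
  have h0 := hkey 0
  have h4 := hkey (4 * lam)
  have h2 := hkey (2 * lam)
  have e1 : (0:ℝ) < Real.exp (-(beta * (lams + muf))) := Real.exp_pos _
  have e2 : (0:ℝ) < Real.exp (-(beta * (4 * lam + lams + 2 * lamf - muf))) := Real.exp_pos _
  have e3 : (0:ℝ) < Real.exp (-(beta * (2 * lam + lams))) := Real.exp_pos _
  have c1 : (0:ℝ) < Real.cosh (beta * hf) := Real.cosh_pos _
  have t1 : (0:ℝ) ≤ (Real.exp (-(beta * muf)) + Real.exp (-(beta * (4 * lam + 2 * lamf - muf))))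
      * Real.cosh (beta * hs) := by positivity
  have t2 : (0:ℝ) ≤ Real.exp (-(beta * (2 * lam - hs))) * Real.cosh (beta * (eta + hf)) := by
    positivity
  have t3 : (0:ℝ) ≤ Real.exp (-(beta * (2 * lam + hs))) * Real.cosh (beta * (eta - hf)) := by
    positivity
  nlinarith [mul_le_mul_of_nonneg_left h0 e1.le,
    mul_le_mul_of_nonneg_left h4 e2.le,
    mul_le_mul_of_nonneg_left h2 (by positivity : (0:ℝ) ≤ 2 * Real.exp (-(beta * (2 * lam + lams))) * Real.cosh (beta * hf)),
    mul_le_mul_of_nonneg_left hE1 t1, mul_le_mul_of_nonneg_left hE1 t2,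
    mul_le_mul_of_nonneg_left hE1 t3]

lemma FF_le (beta gams lams lamf lam mus muf hs hf eta : ℝ) (hbeta : 0 < beta)
    (hgams : 0 < gams) {r : ℝ} (hr : 0 ≤ r) :
    FF beta gams lams lamf lam mus muf hs hf eta r ≤
      beta⁻¹ * Real.log (CC beta gams lams lamf lam mus muf hs hf eta)
        + gams * Real.sqrt r - gams * r := by
  have hC := CC_pos beta gams lams lamf lam mus muf hs hf eta
  have hle := ff_le beta gams lams lamf lam mus muf hs hf eta hbeta hgams hr
  have hfp := ff_pos beta gams lams lamf lam mus muf hs hf eta r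
  have hlog : Real.log (ff beta gams lams lamf lam mus muf hs hf eta r) ≤
      Real.log (CC beta gams lams lamf lam mus muf hs hf eta) + beta * gams * Real.sqrt r := by
    calc Real.log (ff beta gams lams lamf lam mus muf hs hf eta r)
        ≤ Real.log (CC beta gams lams lamf lam mus muf hs hf eta
            * Real.exp (beta * gams * Real.sqrt r)) := Real.log_le_log hfp hle
      _ = Real.log (CC beta gams lams lamf lam mus muf hs hf eta)
            + beta * gams * Real.sqrt r := by
          rw [Real.log_mul hC.ne' (Real.exp_pos _).ne', Real.log_exp]
  unfold FF
  have hbinv : (0:ℝ) < beta⁻¹ := by positivity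
  have := mul_le_mul_of_nonneg_left hlog hbinv.le
  have hb : beta⁻¹ * (beta * gams * Real.sqrt r) = gams * Real.sqrt r := by
    field_simp
  rw [mul_add, hb] at this
  linarith

/-- the set of maximizers of `F` over `[0,∞)` is nonempty and
compact, and the supremum is finite (the image of `F` on `[0,∞)` is bounded above). -/
theorem maximizers_nonempty_compact (beta gams lams lamf lam mus muf hs hf eta : ℝ) (hbeta : 0 < beta) (hgams : 0 < gams) (hlams : 0 ≤ lams) (hlamf : 0 ≤ lamf) (hlam : 0 ≤ lam) :
    {r : ℝ | 0 ≤ r ∧ ∀ r' : ℝ, 0 ≤ r' → FF beta gams lams lamf lam mus muf hs hf eta r' ≤ FF beta gams lams lamf lam mus muf hs hf eta r}.Nonempty ∧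
    IsCompact {r : ℝ | 0 ≤ r ∧ ∀ r' : ℝ, 0 ≤ r' → FF beta gams lams lamf lam mus muf hs hf eta r' ≤ FF beta gams lams lamf lam mus muf hs hf eta r} ∧
    BddAbove ((fun r => FF beta gams lams lamf lam mus muf hs hf eta r) '' Set.Ici 0) := by
  set F := fun r => FF beta gams lams lamf lam mus muf hs hf eta r with hF
  set K := beta⁻¹ * Real.log (CC beta gams lams lamf lam mus muf hs hf eta) with hK
  set R : ℝ := max 4 (2 * (K - F 0 + 1) / gams) with hRdef
  have hR4 : (4:ℝ) ≤ R := le_max_left _ _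
  have hR0 : (0:ℝ) ≤ R := by linarith
  -- for r ≥ R, F r < F 0
  have htail : ∀ r : ℝ, R ≤ r → F r ≤ F 0 - 1 := by
    intro r hrR
    have hr0 : (0:ℝ) ≤ r := le_trans hR0 hrR
    have hbound := FF_le beta gams lams lamf lam mus muf hs hf eta hbeta hgams hr0
    have hr4 : (4:ℝ) ≤ r := le_trans hR4 hrR
    have hsq : Real.sqrt r ≤ r / 2 := by
      nlinarith [Real.sq_sqrt hr0, Real.sqrt_nonneg r, sq_nonneg (Real.sqrt r - 2)]
    have hr2 : 2 * (K - F 0 + 1) / gams ≤ r := le_trans (le_max_right _ _) hrR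
    have hgr : 2 * (K - F 0 + 1) ≤ gams * r := by
      rw [div_le_iff₀ hgams] at hr2; linarith
    have : F r ≤ K + gams * (r / 2) - gams * r := by
      have := mul_le_mul_of_nonneg_left hsq hgams.le
      simp only [hF]; linarith [hbound]
    have : F r ≤ K - gams * r / 2 := by linarith
    linarith
  -- maximizer on [0, R]
  have hcont : Continuous F := FF_continuous beta gams lams lamf lam mus muf hs hf eta
  obtain ⟨r0, hr0mem, hr0max⟩ :=
    (isCompact_Icc (a := (0:ℝ)) (b := R)).exists_isMaxOn (Set.nonempty_Icc.mpr hR0)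
      hcont.continuousOn
  have hglobal : ∀ r' : ℝ, 0 ≤ r' → F r' ≤ F r0 := by
    intro r' hr'
    by_cases h : r' ≤ R
    · exact hr0max ⟨hr', h⟩
    · have h1 : F r' ≤ F 0 - 1 := htail r' (le_of_lt (not_le.mp h))
      have h2 : F 0 ≤ F r0 := hr0max ⟨le_refl 0, hR0⟩
      linarith
  set S := {r : ℝ | 0 ≤ r ∧ ∀ r' : ℝ, 0 ≤ r' → F r' ≤ F r} with hS
  have hne : S.Nonempty := ⟨r0, hr0mem.1, hglobal⟩
  have hsub : S ⊆ Set.Icc 0 R := by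
    intro r ⟨hr1, hr2⟩
    refine ⟨hr1, ?_⟩
    by_contra h
    have hRr : R ≤ r := le_of_lt (not_le.mp h)
    have h1 : F r ≤ F 0 - 1 := htail r hRr
    have h2 : F 0 ≤ F r := hr2 0 le_rfl
    linarith
  have hclosed : IsClosed S := by
    have : S = Set.Ici 0 ∩ ⋂ r' ∈ Set.Ici (0:ℝ), {r : ℝ | F r' ≤ F r} := by
      ext r
      simp only [hS, Set.mem_setOf_eq, Set.mem_inter_iff, Set.mem_Ici, Set.mem_iInter]
    rw [this]
    exact isClosed_Ici.inter (isClosed_biInter fun r' _ =>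
      isClosed_le continuous_const hcont)
  have hcompact : IsCompact S := (isCompact_Icc).of_isClosed_subset hclosed hsub
  refine ⟨hne, hcompact, ⟨F r0, ?_⟩⟩
  rintro y ⟨x, hx, rfl⟩
  exact hglobal x hx
end

section
/- (Gap equation.) If r_β > 0 is a maximizer of the variational functional F over [0,∞), then r_β satisfies the Euler–Lagrange (gap) equation G_0(r_β) + G_1(r_β) + G_2(r_β) = 2/γ_s. -/
open Real Filter

/-- `G_0`. -/
noncomputable def G0 (beta gams lams lamf lam mus muf hs hf eta r : ℝ) : ℝ :=
  Real.sinh (beta * gg gams lams mus r 0) /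
    (ff beta gams lams lamf lam mus muf hs hf eta r * Real.exp (beta * (lams + muf))
      * gg gams lams mus r 0)

/-- `G_1`. -/
noncomputable def G1 (beta gams lams lamf lam mus muf hs hf eta r : ℝ) : ℝ :=
  2 * Real.cosh (beta * hf) * Real.sinh (beta * gg gams lams mus r (2 * lam)) /
    (ff beta gams lams lamf lam mus muf hs hf eta r * Real.exp (beta * (2 * lam + lams))
      * gg gams lams mus r (2 * lam))

/-- `G_2`. -/
noncomputable def G2 (beta gams lams lamf lam mus muf hs hf eta r : ℝ) : ℝ :=
  Real.sinh (beta * gg gams lams mus r (4 * lam)) /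
    (ff beta gams lams lamf lam mus muf hs hf eta r
      * Real.exp (beta * (4 * lam + lams + 2 * lamf - muf))
      * gg gams lams mus r (4 * lam))


/-- gap equation: any strictly positive maximizer `rb` of `F` over
`[0,∞)` satisfies `G_0(rb) + G_1(rb) + G_2(rb) = 2/γ_s`. -/
theorem gap_equation (beta gams lams lamf lam mus muf hs hf eta : ℝ) (hbeta : 0 < beta) (hgams : 0 < gams) (hlams : 0 ≤ lams) (hlamf : 0 ≤ lamf) (hlam : 0 ≤ lam)
    (rb : ℝ) (hrb : 0 < rb)
    (hmax : ∀ r' : ℝ, 0 ≤ r' → FF beta gams lams lamf lam mus muf hs hf eta r' ≤ FF beta gams lams lamf lam mus muf hs hf eta rb) :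
    G0 beta gams lams lamf lam mus muf hs hf eta rb + G1 beta gams lams lamf lam mus muf hs hf eta rb + G2 beta gams lams lamf lam mus muf hs hf eta rb = 2 / gams := by
  -- positivity of the g's
  have hgpos : ∀ x : ℝ, 0 < gg gams lams mus rb x := by
    intro x
    apply Real.sqrt_pos.mpr
    have : 0 < gams ^ 2 * rb := by positivity
    nlinarith [sq_nonneg (x + lams - mus)]
  -- derivative of r ↦ gg gams lams mus r x at rb
  have hggd : ∀ x : ℝ, HasDerivAt (fun r => gg gams lams mus r x)
      (gams ^ 2 / (2 * gg gams lams mus rb x)) rb := by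
    intro x
    have hu : 0 < (x + lams - mus) ^ 2 + gams ^ 2 * rb := by
      have : 0 < gams ^ 2 * rb := by positivity
      nlinarith [sq_nonneg (x + lams - mus)]
    have h1 : HasDerivAt (fun r : ℝ => (x + lams - mus) ^ 2 + gams ^ 2 * r) (gams ^ 2) rb := by
      have := ((hasDerivAt_id rb).const_mul (gams ^ 2)).const_add ((x + lams - mus) ^ 2)
      simpa using this
    have h2 := (Real.hasDerivAt_sqrt hu.ne').comp rb h1
    simp only [gg]
    exact h2.congr_deriv (by ring)
  -- derivative of the cosh pieces
  have hcoshd : ∀ x : ℝ, HasDerivAt (fun r => Real.cosh (beta * gg gams lams mus r x))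
      (Real.sinh (beta * gg gams lams mus rb x) * (beta * (gams ^ 2 / (2 * gg gams lams mus rb x)))) rb := by
    intro x
    exact (Real.hasDerivAt_cosh _).comp rb ((hggd x).const_mul beta)
  set g0 := gg gams lams mus rb 0 with hg0
  set g2 := gg gams lams mus rb (2 * lam) with hg2
  set g4 := gg gams lams mus rb (4 * lam) with hg4
  have hg0p : 0 < g0 := hgpos 0
  have hg2p : 0 < g2 := hgpos (2 * lam)
  have hg4p : 0 < g4 := hgpos (4 * lam)
  set D : ℝ :=
    Real.exp (-(beta * (lams + muf))) * (Real.sinh (beta * g0) * (beta * (gams ^ 2 / (2 * g0))))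
    + Real.exp (-(beta * (4 * lam + lams + 2 * lamf - muf)))
        * (Real.sinh (beta * g4) * (beta * (gams ^ 2 / (2 * g4))))
    + 2 * Real.exp (-(beta * (2 * lam + lams))) * Real.cosh (beta * hf)
        * (Real.sinh (beta * g2) * (beta * (gams ^ 2 / (2 * g2)))) with hD
  -- derivative of ff
  have hffd : HasDerivAt (fun r => ff beta gams lams lamf lam mus muf hs hf eta r) D rb := by
    unfold ff
    rw [hD]
    have c0 := (hcoshd 0).const_mul (Real.exp (-(beta * (lams + muf))))
    have c4 := (hcoshd (4 * lam)).const_mul (Real.exp (-(beta * (4 * lam + lams + 2 * lamf - muf))))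
    have c2 := (hcoshd (2 * lam)).const_mul
      (2 * Real.exp (-(beta * (2 * lam + lams))) * Real.cosh (beta * hf))
    have h := ((((hasDerivAt_const rb _).add c0).add c4).add c2 :
      HasDerivAt (fun r =>
        ((Real.exp (-(beta * muf)) + Real.exp (-(beta * (4 * lam + 2 * lamf - muf))))
            * Real.cosh (beta * hs)
          + Real.exp (-(beta * (2 * lam - hs))) * Real.cosh (beta * (eta + hf))
          + Real.exp (-(beta * (2 * lam + hs))) * Real.cosh (beta * (eta - hf))
          + Real.exp (-(beta * (lams + muf))) * Real.cosh (beta * gg gams lams mus r 0)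
          + Real.exp (-(beta * (4 * lam + lams + 2 * lamf - muf)))
              * Real.cosh (beta * gg gams lams mus r (4 * lam))
          + 2 * Real.exp (-(beta * (2 * lam + lams))) * Real.cosh (beta * hf)
              * Real.cosh (beta * gg gams lams mus r (2 * lam)))) _ rb)
    exact h.congr_deriv (by rw [← hg0, ← hg2, ← hg4]; ring)
  set fv := ff beta gams lams lamf lam mus muf hs hf eta rb with hfv
  have hfpos : 0 < fv := by
    rw [hfv]; unfold ff
    have := Real.one_le_cosh (beta * hs)
    have := Real.one_le_cosh (beta * (eta + hf))
    have := Real.one_le_cosh (beta * (eta - hf))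
    have := Real.one_le_cosh (beta * gg gams lams mus rb 0)
    have := Real.one_le_cosh (beta * gg gams lams mus rb (4 * lam))
    have := Real.one_le_cosh (beta * gg gams lams mus rb (2 * lam))
    have := Real.one_le_cosh (beta * hf)
    positivity
  -- derivative of FF
  have hFFd : HasDerivAt (fun r => FF beta gams lams lamf lam mus muf hs hf eta r)
      (-gams + beta⁻¹ * (D / fv)) rb := by
    unfold FF
    have h1 : HasDerivAt (fun r : ℝ => -(gams * r)) (-gams) rb := by
      have := ((hasDerivAt_id rb).const_mul gams).neg
      simp only [id, mul_one] at this
      exact this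
    exact h1.add ((hffd.log hfpos.ne').const_mul beta⁻¹)
  -- local max ⇒ derivative zero
  have hloc : IsLocalMax (fun r => FF beta gams lams lamf lam mus muf hs hf eta r) rb := by
    filter_upwards [isOpen_Ioi.mem_nhds (Set.mem_Ioi.mpr hrb)] with r hr
    exact hmax r (le_of_lt hr)
  have hzero : -gams + beta⁻¹ * (D / fv) = 0 := hloc.hasDerivAt_eq_zero hFFd
  -- hence D = gams * beta * fv
  have hDval : D = gams * beta * fv := by
    field_simp at hzero
    linarith
  -- final algebra
  unfold G0 G1 G2
  rw [← hg0, ← hg2, ← hg4, ← hfv]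
  rw [hD] at hDval
  rw [Real.exp_neg, Real.exp_neg, Real.exp_neg] at hDval
  have e0 := Real.exp_pos (beta * (lams + muf))
  have e2 := Real.exp_pos (beta * (2 * lam + lams))
  have e4 := Real.exp_pos (beta * (4 * lam + lams + 2 * lamf - muf))
  field_simp at hDval ⊢
  have hne : (4 * beta * gams) ≠ 0 := by positivity
  apply mul_left_cancel₀ hne
  linear_combination (4 * beta * gams) * hDval
end

section
/- For every r > 0 one has 0 ≤ G_0(r) + G_1(r) + G_2(r) ≤ min(β, 1/(γ_s·sqrt(r))). -/
open Real Filter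

lemma sinh_le_mul_cosh {x : ℝ} (hx : 0 ≤ x) : Real.sinh x ≤ x * Real.cosh x := by
  have hmono : MonotoneOn (fun t : ℝ => t * Real.cosh t - Real.sinh t) (Set.Ici 0) := by
    apply monotoneOn_of_deriv_nonneg (convex_Ici 0)
    · exact ((continuous_id.mul Real.continuous_cosh).sub Real.continuous_sinh).continuousOn
    · intro t ht
      exact (((differentiable_id.mul Real.differentiable_cosh).sub
        Real.differentiable_sinh) t).differentiableWithinAt
    · intro t ht
      rw [interior_Ici] at ht
      have h1 : HasDerivAt (fun t : ℝ => t * Real.cosh t - Real.sinh t)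
          (1 * Real.cosh t + t * Real.sinh t - Real.cosh t) t :=
        ((hasDerivAt_id t).mul (Real.hasDerivAt_cosh t)).sub (Real.hasDerivAt_sinh t)
      rw [h1.deriv]
      have : (0:ℝ) ≤ t * Real.sinh t :=
        mul_nonneg ht.le (Real.sinh_nonneg_iff.mpr ht.le)
      linarith
  have := hmono (Set.self_mem_Ici) (Set.mem_Ici.mpr hx) hx
  simp at this
  linarith

/-- Key estimate: `sinh(βg)/g ≤ min(β, 1/c)·cosh(βg)` when `0 < c ≤ g`. -/
lemma key_est {beta c g : ℝ} (hb : 0 < beta) (hc : 0 < c) (hcg : c ≤ g) :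
    Real.sinh (beta * g) / g ≤ min beta (1 / c) * Real.cosh (beta * g) := by
  have hg : 0 < g := hc.trans_le hcg
  have hch : 0 < Real.cosh (beta * g) := Real.cosh_pos _
  rw [min_mul_of_nonneg _ _ hch.le]
  apply le_min
  · rw [div_le_iff₀ hg]
    have h := sinh_le_mul_cosh (x := beta * g) (by positivity)
    nlinarith
  · rw [div_le_iff₀ hg]
    have hsc : Real.sinh (beta * g) ≤ Real.cosh (beta * g) := by
      have h1 := Real.cosh_sub_sinh (beta * g)
      have h2 := Real.exp_pos (-(beta * g))
      linarith
    have heq : 1 / c * Real.cosh (beta * g) * g = Real.cosh (beta * g) * g / c := by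
      ring
    rw [heq, le_div_iff₀ hc]
    nlinarith

/-- for every `r > 0`,
`0 ≤ G_0(r) + G_1(r) + G_2(r) ≤ min(β, 1/(γ_s √r))`. -/
theorem G_sum_bounds (beta gams lams lamf lam mus muf hs hf eta : ℝ) (hbeta : 0 < beta) (hgams : 0 < gams) (hlams : 0 ≤ lams) (hlamf : 0 ≤ lamf) (hlam : 0 ≤ lam) :
    ∀ r : ℝ, 0 < r →
      0 ≤ G0 beta gams lams lamf lam mus muf hs hf eta r + G1 beta gams lams lamf lam mus muf hs hf eta r + G2 beta gams lams lamf lam mus muf hs hf eta r ∧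
      G0 beta gams lams lamf lam mus muf hs hf eta r + G1 beta gams lams lamf lam mus muf hs hf eta r + G2 beta gams lams lamf lam mus muf hs hf eta r ≤ min beta (1 / (gams * Real.sqrt r)) := by
  intro r hr
  set c := gams * Real.sqrt r with hcdef
  have hc : 0 < c := by positivity
  -- g's
  have hgpos : ∀ x : ℝ, 0 < gg gams lams mus r x := by
    intro x; unfold gg; positivity
  have hgge : ∀ x : ℝ, c ≤ gg gams lams mus r x := by
    intro x
    unfold gg
    rw [hcdef]
    have h1 : gams * Real.sqrt r = Real.sqrt (gams ^ 2 * r) := by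
      rw [Real.sqrt_mul (by positivity), Real.sqrt_sq hgams.le]
    rw [h1]
    apply Real.sqrt_le_sqrt
    nlinarith [sq_nonneg (x + lams - mus)]
  set g0 := gg gams lams mus r 0 with hg0
  set g1 := gg gams lams mus r (2 * lam) with hg1
  set g2 := gg gams lams mus r (4 * lam) with hg2
  set f := ff beta gams lams lamf lam mus muf hs hf eta r with hfdef
  have hfpos : 0 < f := by
    rw [hfdef]; unfold ff
    have c1 := Real.cosh_pos (x := beta * hs)
    have c2 := Real.cosh_pos (x := beta * (eta + hf))
    have c3 := Real.cosh_pos (x := beta * (eta - hf))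
    have c4 := Real.cosh_pos (x := beta * gg gams lams mus r 0)
    have c5 := Real.cosh_pos (x := beta * gg gams lams mus r (4 * lam))
    have c6 := Real.cosh_pos (x := beta * hf)
    have c7 := Real.cosh_pos (x := beta * gg gams lams mus r (2 * lam))
    positivity
  -- the three relevant terms of f
  set t0 := Real.exp (-(beta * (lams + muf))) * Real.cosh (beta * g0) with ht0
  set t2 := Real.exp (-(beta * (4 * lam + lams + 2 * lamf - muf))) * Real.cosh (beta * g2)
    with ht2
  set t1 := 2 * Real.exp (-(beta * (2 * lam + lams))) * Real.cosh (beta * hf)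
    * Real.cosh (beta * g1) with ht1
  have hsum_le_f : t0 + t1 + t2 ≤ f := by
    rw [hfdef]; unfold ff
    rw [ht0, ht1, ht2, hg0, hg1, hg2]
    have c1 := Real.cosh_pos (x := beta * hs)
    have c2 := Real.cosh_pos (x := beta * (eta + hf))
    have c3 := Real.cosh_pos (x := beta * (eta - hf))
    have e1 := Real.exp_pos (-(beta * muf))
    have e2 := Real.exp_pos (-(beta * (4 * lam + 2 * lamf - muf)))
    have e3 := Real.exp_pos (-(beta * (2 * lam - hs)))
    have e4 := Real.exp_pos (-(beta * (2 * lam + hs)))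
    nlinarith
  set m := min beta (1 / c) with hm
  have hmpos : 0 < m := lt_min hbeta (by positivity)
  -- bounds for each G
  have key0 := key_est (g := g0) hbeta hc (hgge 0)
  have key1 := key_est (g := g1) hbeta hc (hgge (2 * lam))
  have key2 := key_est (g := g2) hbeta hc (hgge (4 * lam))
  have hg0p := hgpos 0
  have hg1p := hgpos (2 * lam)
  have hg2p := hgpos (4 * lam)
  rw [← hg0] at hg0p; rw [← hg1] at hg1p; rw [← hg2] at hg2p
  have hE0 := Real.exp_pos (beta * (lams + muf))
  have hE1 := Real.exp_pos (beta * (2 * lam + lams))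
  have hE2 := Real.exp_pos (beta * (4 * lam + lams + 2 * lamf - muf))
  have hchf := Real.cosh_pos (x := beta * hf)
  -- rewrite each G
  have hG0 : G0 beta gams lams lamf lam mus muf hs hf eta r
      = (Real.sinh (beta * g0) / g0) / (f * Real.exp (beta * (lams + muf))) := by
    unfold G0
    rw [← hg0, ← hfdef]
    field_simp
  have hG1 : G1 beta gams lams lamf lam mus muf hs hf eta r
      = 2 * Real.cosh (beta * hf) * (Real.sinh (beta * g1) / g1)
        / (f * Real.exp (beta * (2 * lam + lams))) := by
    unfold G1
    rw [← hg1, ← hfdef]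
    field_simp
  have hG2 : G2 beta gams lams lamf lam mus muf hs hf eta r
      = (Real.sinh (beta * g2) / g2)
        / (f * Real.exp (beta * (4 * lam + lams + 2 * lamf - muf))) := by
    unfold G2
    rw [← hg2, ← hfdef]
    field_simp
  -- nonnegativity
  have hs0 : 0 ≤ Real.sinh (beta * g0) := Real.sinh_nonneg_iff.mpr (by positivity)
  have hs1 : 0 ≤ Real.sinh (beta * g1) := Real.sinh_nonneg_iff.mpr (by positivity)
  have hs2 : 0 ≤ Real.sinh (beta * g2) := Real.sinh_nonneg_iff.mpr (by positivity)
  have hG0nn : 0 ≤ G0 beta gams lams lamf lam mus muf hs hf eta r := by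
    rw [hG0]; positivity
  have hG1nn : 0 ≤ G1 beta gams lams lamf lam mus muf hs hf eta r := by
    rw [hG1]; positivity
  have hG2nn : 0 ≤ G2 beta gams lams lamf lam mus muf hs hf eta r := by
    rw [hG2]; positivity
  refine ⟨by linarith, ?_⟩
  -- each G_i ≤ m * t_i / f
  have hb0 : G0 beta gams lams lamf lam mus muf hs hf eta r ≤ m * t0 / f := by
    rw [hG0, ht0, Real.exp_neg]
    rw [div_le_div_iff₀ (by positivity) hfpos]
    have h2 : Real.sinh (beta * g0) / g0 * f ≤ m * Real.cosh (beta * g0) * f := by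
      apply mul_le_mul_of_nonneg_right key0 hfpos.le
    calc Real.sinh (beta * g0) / g0 * f ≤ m * Real.cosh (beta * g0) * f := h2
      _ = m * ((Real.exp (beta * (lams + muf)))⁻¹ * Real.cosh (beta * g0))
          * (f * Real.exp (beta * (lams + muf))) := by
          field_simp
  have hb1 : G1 beta gams lams lamf lam mus muf hs hf eta r ≤ m * t1 / f := by
    rw [hG1, ht1, Real.exp_neg]
    rw [div_le_div_iff₀ (by positivity) hfpos]
    have h2 : 2 * Real.cosh (beta * hf) * (Real.sinh (beta * g1) / g1) * f
        ≤ 2 * Real.cosh (beta * hf) * (m * Real.cosh (beta * g1)) * f := by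
      apply mul_le_mul_of_nonneg_right _ hfpos.le
      apply mul_le_mul_of_nonneg_left key1 (by positivity)
    calc 2 * Real.cosh (beta * hf) * (Real.sinh (beta * g1) / g1) * f
        ≤ 2 * Real.cosh (beta * hf) * (m * Real.cosh (beta * g1)) * f := h2
      _ = m * (2 * (Real.exp (beta * (2 * lam + lams)))⁻¹ * Real.cosh (beta * hf)
          * Real.cosh (beta * g1)) * (f * Real.exp (beta * (2 * lam + lams))) := by
          field_simp
  have hb2 : G2 beta gams lams lamf lam mus muf hs hf eta r ≤ m * t2 / f := by
    rw [hG2, ht2, Real.exp_neg]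
    rw [div_le_div_iff₀ (by positivity) hfpos]
    have h2 : Real.sinh (beta * g2) / g2 * f ≤ m * Real.cosh (beta * g2) * f := by
      apply mul_le_mul_of_nonneg_right key2 hfpos.le
    calc Real.sinh (beta * g2) / g2 * f ≤ m * Real.cosh (beta * g2) * f := h2
      _ = m * ((Real.exp (beta * (4 * lam + lams + 2 * lamf - muf)))⁻¹
          * Real.cosh (beta * g2))
          * (f * Real.exp (beta * (4 * lam + lams + 2 * lamf - muf))) := by
          field_simp
  have hfin : m * t0 / f + m * t1 / f + m * t2 / f ≤ m := by
    rw [← add_div, ← add_div, div_le_iff₀ hfpos]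
    have : m * t0 + m * t1 + m * t2 = m * (t0 + t1 + t2) := by ring
    rw [this]
    exact mul_le_mul_of_nonneg_left hsum_le_f hmpos.le
  linarith
end

section
/- (Cooper pair condensate density as derivative of the pressure.) Suppose that at the given parameter values the variational functional F has a unique maximizer r_β over [0,∞). Then the map γ ↦ p(γ), obtained by letting the BCS coupling γ_s = γ vary with all other parameters held fixed, is differentiable at γ = γ_s, and its derivative there equals r_β. -/
open Real Filter

/-- The grand-canonical pressure `p = β⁻¹ ln 2 + μ_s + μ_f + sup_{r ≥ 0} F(r)`. -/
noncomputable def pp (beta gams lams lamf lam mus muf hs hf eta : ℝ) : ℝ :=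
  beta⁻¹ * Real.log 2 + mus + muf +
    sSup ((fun r => FF beta gams lams lamf lam mus muf hs hf eta r) '' Set.Ici 0)

lemma sqrt_add_le' (a b : ℝ) (hb : 0 ≤ b) : Real.sqrt (a + b) ≤ Real.sqrt a + Real.sqrt b := by
  rcases le_or_gt a 0 with ha | ha
  · calc Real.sqrt (a + b) ≤ Real.sqrt b := by
          apply Real.sqrt_le_sqrt; linarith
      _ ≤ Real.sqrt a + Real.sqrt b := le_add_of_nonneg_left (Real.sqrt_nonneg a)
  · have h : a + b ≤ (Real.sqrt a + Real.sqrt b)^2 := by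
      nlinarith [Real.sq_sqrt ha.le, Real.sq_sqrt hb, Real.sqrt_nonneg a, Real.sqrt_nonneg b,
        mul_nonneg (Real.sqrt_nonneg a) (Real.sqrt_nonneg b)]
    calc Real.sqrt (a + b) ≤ Real.sqrt ((Real.sqrt a + Real.sqrt b)^2) := Real.sqrt_le_sqrt h
      _ = Real.sqrt a + Real.sqrt b := Real.sqrt_sq (by positivity)

lemma cosh_add_le (A B : ℝ) (hB : 0 ≤ B) : Real.cosh (A + B) ≤ Real.cosh A * Real.exp B := by
  rw [Real.cosh_eq, Real.cosh_eq, Real.exp_add]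
  have h1 : Real.exp (-(A+B)) ≤ Real.exp (-A) * Real.exp B := by
    rw [← Real.exp_add]; apply Real.exp_le_exp.2; linarith
  nlinarith [Real.exp_pos (-A), Real.exp_pos B, Real.exp_pos A]

lemma cosh_sqrt_le (beta a t : ℝ) (hbeta : 0 ≤ beta) (ht : 0 ≤ t) :
    Real.cosh (beta * Real.sqrt (a^2 + t)) ≤
      Real.cosh (beta * Real.sqrt (a^2)) * Real.exp (beta * Real.sqrt t) := by
  have h1 : Real.sqrt (a^2 + t) ≤ Real.sqrt (a^2) + Real.sqrt t := sqrt_add_le' _ _ ht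
  have h2 : Real.cosh (beta * Real.sqrt (a^2 + t)) ≤
      Real.cosh (beta * Real.sqrt (a^2) + beta * Real.sqrt t) := by
    rw [Real.cosh_le_cosh]
    rw [abs_of_nonneg (by positivity), abs_of_nonneg (by positivity)]
    nlinarith
  exact h2.trans (cosh_add_le _ _ (by positivity))

lemma ff_reparam (beta gams lams lamf lam mus muf hs hf eta r : ℝ) :
    ff beta gams lams lamf lam mus muf hs hf eta r
      = ff beta 1 lams lamf lam mus muf hs hf eta (gams^2*r) := by
  simp only [ff, gg, one_pow, one_mul]

lemma ff_growth (beta lams lamf lam mus muf hs hf eta t : ℝ) (hbeta : 0 < beta) (ht : 0 ≤ t) :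
    ff beta 1 lams lamf lam mus muf hs hf eta t ≤
      ff beta 1 lams lamf lam mus muf hs hf eta 0 * Real.exp (beta * Real.sqrt t) := by
  have hE : 1 ≤ Real.exp (beta * Real.sqrt t) := by
    rw [← Real.exp_zero]; apply Real.exp_le_exp.2; positivity
  have key : ∀ x : ℝ, Real.cosh (beta * gg 1 lams mus t x) ≤
      Real.cosh (beta * gg 1 lams mus 0 x) * Real.exp (beta * Real.sqrt t) := by
    intro x
    have h0 : gg 1 lams mus t x = Real.sqrt ((x + lams - mus)^2 + t) := by
      simp [gg]
    have h1 : gg 1 lams mus 0 x = Real.sqrt ((x + lams - mus)^2) := by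
      simp [gg]
    rw [h0, h1]
    exact cosh_sqrt_le beta _ t hbeta.le ht
  have haux : ∀ x y : ℝ, 0 ≤ x → x * Real.cosh y ≤ x * Real.cosh y * Real.exp (beta * Real.sqrt t) := by
    intro x y hx
    exact le_mul_of_one_le_right (by positivity) hE
  set E := Real.exp (beta * Real.sqrt t) with hEdef
  have expand : ff beta 1 lams lamf lam mus muf hs hf eta 0 * E =
      (Real.exp (-(beta * muf)) + Real.exp (-(beta * (4 * lam + 2 * lamf - muf))))
        * Real.cosh (beta * hs) * E
      + Real.exp (-(beta * (2 * lam - hs))) * Real.cosh (beta * (eta + hf)) * E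
      + Real.exp (-(beta * (2 * lam + hs))) * Real.cosh (beta * (eta - hf)) * E
      + Real.exp (-(beta * (lams + muf))) * (Real.cosh (beta * gg 1 lams mus 0 0) * E)
      + Real.exp (-(beta * (4 * lam + lams + 2 * lamf - muf)))
        * (Real.cosh (beta * gg 1 lams mus 0 (4 * lam)) * E)
      + 2 * Real.exp (-(beta * (2 * lam + lams))) * Real.cosh (beta * hf)
        * (Real.cosh (beta * gg 1 lams mus 0 (2 * lam)) * E) := by
    unfold ff; ring
  rw [expand]
  unfold ff
  refine add_le_add (add_le_add (add_le_add (add_le_add (add_le_add ?_ ?_) ?_) ?_) ?_) ?_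
  · exact haux _ _ (by positivity)
  · exact haux _ _ (by positivity)
  · exact haux _ _ (by positivity)
  · exact mul_le_mul_of_nonneg_left (key 0) (by positivity)
  · exact mul_le_mul_of_nonneg_left (key (4*lam)) (by positivity)
  · exact mul_le_mul_of_nonneg_left (key (2*lam)) (by positivity)

set_option maxHeartbeats 1000000 in
lemma envelope (φ : ℝ → ℝ) (hφc : Continuous φ)
    (hgrow : ∀ t, 0 ≤ t → φ t ≤ φ 0 + Real.sqrt t)
    (u₀ : ℝ) (hu₀ : 0 < u₀) (tβ : ℝ) (htβ : 0 ≤ tβ)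
    (hmax : ∀ t, 0 ≤ t → φ t - t * u₀ ≤ φ tβ - tβ * u₀)
    (huniq : ∀ t, 0 ≤ t → (∀ t', 0 ≤ t' → φ t' - t' * u₀ ≤ φ t - t * u₀) → t = tβ) :
    HasDerivAt (fun u => sSup ((fun t => φ t - t * u) '' Set.Ici 0)) (-tβ) u₀ := by
  set H : ℝ → ℝ := fun u => sSup ((fun t => φ t - t * u) '' Set.Ici 0) with hH
  obtain ⟨u₁, hu₁def⟩ : ∃ u₁ : ℝ, u₁ = u₀ / 2 := ⟨_, rfl⟩
  have hu₁ : 0 < u₁ := by rw [hu₁def]; positivity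
  obtain ⟨M, hMdef⟩ : ∃ M : ℝ, M = (u₁⁻¹)^2 + tβ + 1 := ⟨_, rfl⟩
  have hM0 : 0 < M := by rw [hMdef]; positivity
  have htβM : tβ + 1 ≤ M := by rw [hMdef]; nlinarith [sq_nonneg u₁⁻¹]
  have hne0 : ∀ u : ℝ, ((fun t => φ t - t * u) '' Set.Ici 0).Nonempty :=
    fun u => Set.Nonempty.image _ Set.nonempty_Ici
  -- boundedness
  have bdd : ∀ u, u₁ ≤ u → BddAbove ((fun t => φ t - t * u) '' Set.Ici 0) := by
    intro u hu
    refine ⟨φ 0 + (4*u₁)⁻¹, ?_⟩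
    rintro y ⟨t, ht, rfl⟩
    simp only [Set.mem_Ici] at ht
    have h1 : φ t ≤ φ 0 + Real.sqrt t := hgrow t ht
    have h2 : Real.sqrt t - t * u₁ ≤ (4*u₁)⁻¹ := by
      have hs := Real.sq_sqrt ht
      rw [show (4*u₁)⁻¹ = 1/(4*u₁) by ring, le_div_iff₀ (by positivity)]
      nlinarith [sq_nonneg (2 * Real.sqrt t * u₁ - 1), sq_nonneg u₁]
    have h5 : t * u₁ ≤ t * u := by nlinarith
    simp only
    linarith
  -- tail bound
  have tail : ∀ u, u₁ ≤ u → ∀ t, M < t → φ t - t * u < φ 0 := by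
    intro u hu t hMt
    have ht0 : 0 ≤ t := by linarith
    have h1 : φ t ≤ φ 0 + Real.sqrt t := hgrow t ht0
    have hs := Real.sq_sqrt ht0
    have hsn := Real.sqrt_nonneg t
    have hMt' : (u₁⁻¹)^2 < t := by rw [hMdef] at hMt; linarith
    have h5 : u₁⁻¹ * u₁ = 1 := inv_mul_cancel₀ hu₁.ne'
    have h6 : 1 < t * u₁^2 := by
      nlinarith [mul_pos (sub_pos.2 hMt') (pow_pos hu₁ 2), h5]
    have hspos : 0 < Real.sqrt t := Real.sqrt_pos.2 (by nlinarith)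
    have h7 : 1 < Real.sqrt t * u₁ := by
      nlinarith [h6, hs, mul_pos hspos hu₁]
    have hkey : Real.sqrt t < t * u := by
      nlinarith [h7, hspos, hs, hu, hu₁, ht0]
    linarith
  -- any maximizer is ≤ M
  have maxle : ∀ u, u₁ ≤ u → ∀ tm, 0 ≤ tm →
      (∀ t, 0 ≤ t → φ t - t * u ≤ φ tm - tm * u) → tm ≤ M := by
    intro u hu tm htm0 hmx
    by_contra h
    push_neg at h
    have h1 := tail u hu tm h
    have h2 := hmx 0 le_rfl
    simp only [zero_mul, sub_zero] at h2
    linarith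
  -- existence of maximizer and value of H
  have exists_max : ∀ u, u₁ ≤ u → ∃ tm, 0 ≤ tm ∧
      (∀ t, 0 ≤ t → φ t - t * u ≤ φ tm - tm * u) ∧ H u = φ tm - tm * u := by
    intro u hu
    have hcont : ContinuousOn (fun t => φ t - t * u) (Set.Icc 0 M) :=
      (hφc.sub (by fun_prop : Continuous fun t : ℝ => t * u)).continuousOn
    obtain ⟨tm, htmmem, htmmax⟩ := isCompact_Icc.exists_isMaxOn
      ⟨0, Set.mem_Icc.2 ⟨le_rfl, hM0.le⟩⟩ hcont
    have hglob : ∀ t, 0 ≤ t → φ t - t * u ≤ φ tm - tm * u := by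
      intro t ht
      rcases le_or_gt t M with hle | hlt
      · exact htmmax ⟨ht, hle⟩
      · have h1 := tail u hu t hlt
        have h2 : φ 0 - 0 * u ≤ φ tm - tm * u := htmmax ⟨le_rfl, hM0.le⟩
        simp only [zero_mul, sub_zero] at h2
        linarith
    refine ⟨tm, htmmem.1, hglob, ?_⟩
    apply le_antisymm
    · apply csSup_le (hne0 u)
      rintro y ⟨t, ht, rfl⟩
      exact hglob t ht
    · exact le_csSup (bdd u hu) ⟨tm, htmmem.1, rfl⟩
  have hu₀u₁ : u₁ ≤ u₀ := by rw [hu₁def]; linarith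
  have hHu₀ : H u₀ = φ tβ - tβ * u₀ := by
    apply le_antisymm
    · apply csSup_le (hne0 u₀)
      rintro y ⟨t, ht, rfl⟩
      exact hmax t ht
    · exact le_csSup (bdd u₀ hu₀u₁) ⟨tβ, htβ, rfl⟩
  -- maximizer localization
  have loc : ∀ ε, 0 < ε → ∃ δ, 0 < δ ∧ ∀ u, |u - u₀| < δ → ∀ tm, 0 ≤ tm →
      (∀ t, 0 ≤ t → φ t - t * u ≤ φ tm - tm * u) → |tm - tβ| ≤ ε := by
    intro ε hε
    by_cases hK : (Set.Icc 0 M ∩ {t | ε ≤ |t - tβ|}).Nonempty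
    · have hKc : IsCompact (Set.Icc 0 M ∩ {t | ε ≤ |t - tβ|}) :=
        isCompact_Icc.inter_right (isClosed_le continuous_const
          ((continuous_id.sub continuous_const).abs))
      obtain ⟨ts, hts, htsmax⟩ := hKc.exists_isMaxOn hK
        (((hφc.sub (by fun_prop : Continuous fun t : ℝ => t * u₀)).continuousOn) :
          ContinuousOn (fun t => φ t - t * u₀) _)
      have hts0 : 0 ≤ ts := hts.1.1
      have htsM : ts ≤ M := hts.1.2
      have hlt : φ ts - ts * u₀ < φ tβ - tβ * u₀ := by
        rcases lt_or_eq_of_le (hmax ts hts0) with h | h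
        · exact h
        · exfalso
          have hmaxts : ∀ t', 0 ≤ t' → φ t' - t' * u₀ ≤ φ ts - ts * u₀ := by
            intro t' ht'
            rw [h]; exact hmax t' ht'
          have heq := huniq ts hts0 hmaxts
          have h2 := hts.2
          simp only [Set.mem_setOf_eq, heq, sub_self, abs_zero] at h2
          linarith
      obtain ⟨c, hcdef⟩ : ∃ c : ℝ, c = (φ tβ - tβ * u₀) - (φ ts - ts * u₀) := ⟨_, rfl⟩
      have hc : 0 < c := by rw [hcdef]; linarith
      refine ⟨min (c/(2*M+2)) u₁, lt_min (by positivity) hu₁, ?_⟩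
      intro u hu tm htm0 htmmax
      have hdu₁ : |u - u₀| < u₁ := lt_of_lt_of_le hu (min_le_right _ _)
      have huu₁ : u₁ ≤ u := by
        have h := abs_lt.1 hdu₁
        rw [hu₁def] at h ⊢
        linarith [h.1]
      have htmM : tm ≤ M := maxle u huu₁ tm htm0 htmmax
      by_contra habs
      push_neg at habs
      have htmK : tm ∈ Set.Icc 0 M ∩ {t | ε ≤ |t - tβ|} := ⟨⟨htm0, htmM⟩, habs.le⟩
      have h3 : φ tm - tm * u₀ ≤ φ ts - ts * u₀ := htsmax htmK
      have h4 : φ tβ - tβ * u ≤ φ tm - tm * u := htmmax tβ htβ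
      have hd : |u - u₀| < c/(2*M+2) := lt_of_lt_of_le hu (min_le_left _ _)
      have hd2 : |u - u₀| * (2*M+2) < c := by
        rw [← lt_div_iff₀ (by linarith : (0:ℝ) < 2*M+2)]
        exact hd
      have habs1 : u₀ - u ≤ |u - u₀| := by rw [abs_sub_comm]; exact le_abs_self _
      have habs2 : -(u₀ - u) ≤ |u - u₀| := by
        rw [abs_sub_comm]; exact neg_le_abs _
      have hle1 : tm * (u₀ - u) ≤ M * |u - u₀| := by
        calc tm * (u₀ - u) ≤ tm * |u - u₀| := mul_le_mul_of_nonneg_left habs1 htm0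
          _ ≤ M * |u - u₀| := mul_le_mul_of_nonneg_right htmM (abs_nonneg _)
        
      have hle2 : -(M * |u - u₀|) ≤ tβ * (u₀ - u) := by
        have h1 : tβ * (-(u₀ - u)) ≤ tβ * |u - u₀| := mul_le_mul_of_nonneg_left habs2 htβ
        have h2 : tβ * |u - u₀| ≤ M * |u - u₀| :=
          mul_le_mul_of_nonneg_right (by linarith) (abs_nonneg _)
        nlinarith
      linarith [h3, h4, hle1, hle2, hd2, abs_nonneg (u - u₀), hcdef]
    · refine ⟨u₁, hu₁, ?_⟩
      intro u hu tm htm0 htmmax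
      have huu₁ : u₁ ≤ u := by
        have h := abs_lt.1 hu
        rw [hu₁def] at h ⊢
        linarith [h.1]
      have htmM : tm ≤ M := maxle u huu₁ tm htm0 htmmax
      by_contra h
      push_neg at h
      exact hK ⟨tm, ⟨htm0, htmM⟩, h.le⟩
  -- derivative via slope
  rw [hasDerivAt_iff_tendsto_slope]
  rw [Metric.tendsto_nhdsWithin_nhds]
  intro ε hε
  obtain ⟨δ₁, hδ₁, hloc⟩ := loc (ε/2) (by linarith)
  refine ⟨min δ₁ u₁, lt_min hδ₁ hu₁, ?_⟩
  intro u hune hud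
  rw [Real.dist_eq] at hud ⊢
  have hd1 : |u - u₀| < δ₁ := lt_of_lt_of_le hud (min_le_left _ _)
  have huu₁ : u₁ ≤ u := by
    have h := abs_lt.1 (lt_of_lt_of_le hud (min_le_right _ _))
    rw [hu₁def] at h ⊢
    linarith [h.1]
  obtain ⟨tm, htm0, htmmax, hHu⟩ := exists_max u huu₁
  have hclose : |tm - tβ| ≤ ε/2 := hloc u hd1 tm htm0 htmmax
  have hune' : u ≠ u₀ := hune
  have hne : u - u₀ ≠ 0 := sub_ne_zero.2 hune'
  have hlow : H u₀ - tβ * (u - u₀) ≤ H u := by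
    have h1 : φ tβ - tβ * u ≤ H u := le_csSup (bdd u huu₁) ⟨tβ, htβ, rfl⟩
    rw [hHu₀]
    nlinarith [h1]
  have hupp : H u ≤ H u₀ - tm * (u - u₀) := by
    rw [hHu, hHu₀]
    nlinarith [hmax tm htm0]
  have key : |H u - H u₀ + tβ * (u - u₀)| ≤ |tm - tβ| * |u - u₀| := by
    rw [abs_le]
    constructor
    · have h0 : (0:ℝ) ≤ |tm - tβ| * |u - u₀| := by positivity
      linarith
    · have h2 : H u - H u₀ + tβ * (u - u₀) ≤ (tβ - tm) * (u - u₀) := by nlinarith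
      calc H u - H u₀ + tβ * (u - u₀) ≤ (tβ - tm) * (u - u₀) := h2
        _ ≤ |(tβ - tm) * (u - u₀)| := le_abs_self _
        _ = |tm - tβ| * |u - u₀| := by rw [abs_mul, abs_sub_comm]
  rw [slope_def_field]
  have heq : (H u - H u₀) / (u - u₀) - (-tβ) = (H u - H u₀ + tβ * (u - u₀)) / (u - u₀) := by
    field_simp
    ring
  rw [heq, abs_div]
  rw [div_lt_iff₀ (abs_pos.2 hne)]
  calc |H u - H u₀ + tβ * (u - u₀)| ≤ |tm - tβ| * |u - u₀| := key
    _ ≤ (ε/2) * |u - u₀| := mul_le_mul_of_nonneg_right hclose (abs_nonneg _)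
    _ < ε * |u - u₀| := mul_lt_mul_of_pos_right (by linarith) (abs_pos.2 hne)

/-- Cooper pair condensate density as derivative of the pressure:
if `F` has a unique maximizer `rb` over `[0,∞)`, then `γ ↦ p(γ)` is differentiable
at `γ_s` with derivative `rb`. -/
theorem pressure_deriv_bcs_coupling (beta gams lams lamf lam mus muf hs hf eta : ℝ) (hbeta : 0 < beta) (hgams : 0 < gams) (hlams : 0 ≤ lams) (hlamf : 0 ≤ lamf) (hlam : 0 ≤ lam)
    (rb : ℝ) (hrb : 0 ≤ rb) (hmax : ∀ r' : ℝ, 0 ≤ r' → FF beta gams lams lamf lam mus muf hs hf eta r' ≤ FF beta gams lams lamf lam mus muf hs hf eta rb)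
    (huniq : ∀ r : ℝ, 0 ≤ r → (∀ r' : ℝ, 0 ≤ r' → FF beta gams lams lamf lam mus muf hs hf eta r' ≤ FF beta gams lams lamf lam mus muf hs hf eta r) → r = rb) :
    HasDerivAt (fun gam => pp beta gam lams lamf lam mus muf hs hf eta) rb gams := by
  set φ : ℝ → ℝ := fun t => beta⁻¹ * Real.log (ff beta 1 lams lamf lam mus muf hs hf eta t)
    with hφdef
  have hffpos : ∀ t, 0 < ff beta 1 lams lamf lam mus muf hs hf eta t :=
    fun t => ff_pos beta 1 lams lamf lam mus muf hs hf eta t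
  have hφc : Continuous φ := by
    apply Continuous.mul continuous_const
    apply Continuous.log
    · unfold ff gg; fun_prop
    · exact fun t => (hffpos t).ne'
  have hgrow : ∀ t, 0 ≤ t → φ t ≤ φ 0 + Real.sqrt t := by
    intro t ht
    have h1 := ff_growth beta lams lamf lam mus muf hs hf eta t hbeta ht
    have h2 : Real.log (ff beta 1 lams lamf lam mus muf hs hf eta t)
        ≤ Real.log (ff beta 1 lams lamf lam mus muf hs hf eta 0) + beta * Real.sqrt t := by
      calc Real.log (ff beta 1 lams lamf lam mus muf hs hf eta t)
          ≤ Real.log (ff beta 1 lams lamf lam mus muf hs hf eta 0 * Real.exp (beta * Real.sqrt t)) :=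
            Real.log_le_log (hffpos t) h1
        _ = Real.log (ff beta 1 lams lamf lam mus muf hs hf eta 0) + beta * Real.sqrt t := by
            rw [Real.log_mul (hffpos 0).ne' (Real.exp_pos _).ne', Real.log_exp]
    rw [hφdef]
    simp only
    have h3 : beta⁻¹ * Real.log (ff beta 1 lams lamf lam mus muf hs hf eta t)
        ≤ beta⁻¹ * (Real.log (ff beta 1 lams lamf lam mus muf hs hf eta 0) + beta * Real.sqrt t) :=
      mul_le_mul_of_nonneg_left h2 (by positivity)
    have h4 : beta⁻¹ * (Real.log (ff beta 1 lams lamf lam mus muf hs hf eta 0) + beta * Real.sqrt t)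
        = beta⁻¹ * Real.log (ff beta 1 lams lamf lam mus muf hs hf eta 0) + Real.sqrt t := by
      field_simp
    linarith
  have FFeq : ∀ gam : ℝ, gam ≠ 0 → ∀ r : ℝ,
      FF beta gam lams lamf lam mus muf hs hf eta r = φ (gam^2*r) - (gam^2*r) * gam⁻¹ := by
    intro gam hgam r
    rw [FF, ff_reparam, hφdef]
    simp only
    field_simp
    ring
  set tβ : ℝ := gams^2 * rb with htβdef
  have htβ : 0 ≤ tβ := by positivity
  have hu₀ : (0:ℝ) < gams⁻¹ := by positivity
  have hsq : ∀ t : ℝ, gams^2 * (t / gams^2) = t := by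
    intro t; field_simp
  have hmax' : ∀ t, 0 ≤ t → φ t - t * gams⁻¹ ≤ φ tβ - tβ * gams⁻¹ := by
    intro t ht
    have h := hmax (t / gams^2) (by positivity)
    rw [FFeq gams hgams.ne' (t / gams^2), FFeq gams hgams.ne' rb, hsq] at h
    exact h
  have huniq' : ∀ t, 0 ≤ t → (∀ t', 0 ≤ t' → φ t' - t' * gams⁻¹ ≤ φ t - t * gams⁻¹) → t = tβ := by
    intro t ht hmx
    have hr : t / gams^2 = rb := by
      apply huniq (t / gams^2) (by positivity)
      intro r' hr'
      rw [FFeq gams hgams.ne' r', FFeq gams hgams.ne' (t / gams^2), hsq]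
      exact hmx (gams^2 * r') (by positivity)
    rw [htβdef, ← hr, hsq]
  have henv := envelope φ hφc hgrow gams⁻¹ hu₀ tβ htβ hmax' huniq'
  have hinv : HasDerivAt (fun γ : ℝ => γ⁻¹) (-(gams^2)⁻¹) gams := hasDerivAt_inv hgams.ne'
  have hcomp := henv.comp gams hinv
  have hval : -tβ * -(gams^2)⁻¹ = rb := by
    rw [htβdef]; field_simp
  rw [hval] at hcomp
  have hP : HasDerivAt (fun γ : ℝ => beta⁻¹ * Real.log 2 + mus + muf +
      sSup ((fun t => φ t - t * γ⁻¹) '' Set.Ici 0)) rb gams := by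
    exact hcomp.const_add (beta⁻¹ * Real.log 2 + mus + muf)
  apply hP.congr_of_eventuallyEq
  filter_upwards [eventually_gt_nhds hgams] with γ hγ
  unfold pp
  congr 1
  congr 1
  ext y
  simp only [Set.mem_image, Set.mem_Ici]
  constructor
  · rintro ⟨r, hr, rfl⟩
    exact ⟨γ^2*r, by positivity, (FFeq γ hγ.ne' r).symm⟩
  · rintro ⟨t, ht, rfl⟩
    refine ⟨t/γ^2, by positivity, ?_⟩
    rw [FFeq γ hγ.ne']
    rw [show γ^2*(t/γ^2) = t from by field_simp]
end

section
/- (Inter-band magnetization density as derivative of the pressure.) Suppose that at the given parameter values the variational functional F has a unique maximizer r_β over [0,∞). Then the map t ↦ p(t), obtained by letting the magnetic inter-band coupling η = t vary with all other parameters held fixed, is differentiable at t = η, and its derivative there equals M := exp(−2βλ)·f(r_β)^{−1}·[ exp(−β·h_s)·sinh(β·(η − h_f)) + exp(β·h_s)·sinh(β·(η + h_f)) ]. -/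
open Real Filter Topology

private lemma abs_log_sub_log_le {m x y : ℝ} (hm : 0 < m) (hx : m ≤ x) (hy : m ≤ y) :
    |Real.log x - Real.log y| ≤ |x - y| / m := by
  wlog h : y ≤ x generalizing x y
  · rw [abs_sub_comm, abs_sub_comm x y]; exact this hy hx (le_of_not_ge h)
  have hy0 : 0 < y := lt_of_lt_of_le hm hy
  have hx0 : 0 < x := lt_of_lt_of_le hm hx
  have h1 : Real.log x - Real.log y = Real.log (x / y) :=
    (Real.log_div (ne_of_gt hx0) (ne_of_gt hy0)).symm
  have h2 : Real.log (x / y) ≤ x / y - 1 := Real.log_le_sub_one_of_pos (by positivity)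
  have h3 : 0 ≤ Real.log x - Real.log y := by
    rw [h1]; exact Real.log_nonneg (by rw [le_div_iff₀ hy0]; linarith)
  rw [abs_of_nonneg h3, abs_of_nonneg (by linarith : (0:ℝ) ≤ x - y), h1]
  calc Real.log (x/y) ≤ x/y - 1 := h2
    _ = (x - y)/y := by field_simp
    _ ≤ (x - y)/m := by gcongr

private lemma abs_log_one_add_sub {u : ℝ} (hu : -1 < u) :
    |Real.log (1 + u) - u| ≤ u ^ 2 / (1 + u) := by
  have h1 : (0:ℝ) < 1 + u := by linarith
  have h2 : Real.log (1 + u) ≤ u := by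
    have := Real.log_le_sub_one_of_pos h1; linarith
  have h3 : u / (1 + u) ≤ Real.log (1 + u) := by
    have h4 := Real.log_le_sub_one_of_pos (show (0:ℝ) < (1+u)⁻¹ by positivity)
    rw [Real.log_inv] at h4
    have h5 : (1+u)⁻¹ - 1 = -(u/(1+u)) := by field_simp; ring
    linarith
  have h6 : u / (1+u) = u - u^2/(1+u) := by field_simp; ring
  rw [abs_le]
  constructor
  · rw [h6] at h3; linarith
  · have : 0 ≤ u^2/(1+u) := by positivity
    linarith

private lemma cosh_le_exp_abs (x : ℝ) : Real.cosh x ≤ Real.exp |x| := by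
  rw [Real.cosh_eq]
  have h1 : Real.exp x ≤ Real.exp |x| := Real.exp_le_exp.2 (le_abs_self x)
  have h2 : Real.exp (-x) ≤ Real.exp |x| := Real.exp_le_exp.2 (neg_le_abs x)
  linarith

noncomputable def AA (beta gams lams lamf lam mus muf hs hf : ℝ) (r : ℝ) : ℝ :=
  (Real.exp (-(beta * muf)) + Real.exp (-(beta * (4 * lam + 2 * lamf - muf))))
      * Real.cosh (beta * hs)
    + Real.exp (-(beta * (lams + muf))) * Real.cosh (beta * gg gams lams mus r 0)
    + Real.exp (-(beta * (4 * lam + lams + 2 * lamf - muf)))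
      * Real.cosh (beta * gg gams lams mus r (4 * lam))
    + 2 * Real.exp (-(beta * (2 * lam + lams))) * Real.cosh (beta * hf)
      * Real.cosh (beta * gg gams lams mus r (2 * lam))

noncomputable def BB (beta lam hs hf : ℝ) (t : ℝ) : ℝ :=
  Real.exp (-(beta * (2 * lam - hs))) * Real.cosh (beta * (t + hf))
    + Real.exp (-(beta * (2 * lam + hs))) * Real.cosh (beta * (t - hf))

noncomputable def BD (beta lam hs hf : ℝ) (t : ℝ) : ℝ :=
  Real.exp (-(beta * (2 * lam - hs))) * (Real.sinh (beta * (t + hf)) * beta)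
    + Real.exp (-(beta * (2 * lam + hs))) * (Real.sinh (beta * (t - hf)) * beta)

lemma ff_eq_AB (beta gams lams lamf lam mus muf hs hf t r : ℝ) :
    ff beta gams lams lamf lam mus muf hs hf t r
      = AA beta gams lams lamf lam mus muf hs hf r + BB beta lam hs hf t := by
  unfold ff AA BB; ring

lemma AA_ge (beta gams lams lamf lam mus muf hs hf r : ℝ) :
    (Real.exp (-(beta * muf)) + Real.exp (-(beta * (4 * lam + 2 * lamf - muf))))
      * Real.cosh (beta * hs) ≤ AA beta gams lams lamf lam mus muf hs hf r := by
  unfold AA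
  have h1 : 0 ≤ Real.exp (-(beta * (lams + muf))) * Real.cosh (beta * gg gams lams mus r 0) :=
    (mul_pos (Real.exp_pos _) (Real.cosh_pos _)).le
  have h2 : 0 ≤ Real.exp (-(beta * (4 * lam + lams + 2 * lamf - muf))) * Real.cosh (beta * gg gams lams mus r (4 * lam)) :=
    (mul_pos (Real.exp_pos _) (Real.cosh_pos _)).le
  have h3 : 0 ≤ 2 * Real.exp (-(beta * (2 * lam + lams))) * Real.cosh (beta * hf) * Real.cosh (beta * gg gams lams mus r (2 * lam)) :=
    (mul_pos (mul_pos (mul_pos two_pos (Real.exp_pos _)) (Real.cosh_pos _)) (Real.cosh_pos _)).le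
  linarith

lemma BB_pos (beta lam hs hf t : ℝ) : 0 < BB beta lam hs hf t := by
  unfold BB
  have h1 := mul_pos (Real.exp_pos (-(beta * (2 * lam - hs)))) (Real.cosh_pos (beta * (t + hf)))
  have h2 := mul_pos (Real.exp_pos (-(beta * (2 * lam + hs)))) (Real.cosh_pos (beta * (t - hf)))
  linarith

lemma AA_continuous (beta gams lams lamf lam mus muf hs hf : ℝ) :
    Continuous (AA beta gams lams lamf lam mus muf hs hf) := by
  unfold AA gg
  have hg : ∀ c : ℝ, Continuous (fun r : ℝ => Real.cosh (beta * Real.sqrt (c + gams ^ 2 * r))) := by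
    intro c
    exact Real.continuous_cosh.comp (continuous_const.mul
      ((continuous_const.add (continuous_const.mul continuous_id)).sqrt))
  exact ((continuous_const.add (continuous_const.mul (hg _))).add
    (continuous_const.mul (hg _))).add (continuous_const.mul (hg _))

lemma BB_hasDerivAt (beta lam hs hf t : ℝ) :
    HasDerivAt (BB beta lam hs hf) (BD beta lam hs hf t) t := by
  have h1 : HasDerivAt (fun t : ℝ => beta * (t + hf)) beta t := by
    simpa using ((hasDerivAt_id t).add_const hf).const_mul beta
  have h2 : HasDerivAt (fun t : ℝ => beta * (t - hf)) beta t := by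
    simpa using ((hasDerivAt_id t).sub_const hf).const_mul beta
  have h3 := ((Real.hasDerivAt_cosh (beta * (t + hf))).comp t h1).const_mul
    (Real.exp (-(beta * (2 * lam - hs))))
  have h4 := ((Real.hasDerivAt_cosh (beta * (t - hf))).comp t h2).const_mul
    (Real.exp (-(beta * (2 * lam + hs))))
  exact h3.add h4

lemma gg_le (gams lams mus : ℝ) (hgams : 0 < gams) {r : ℝ} (hr : 0 ≤ r) (x : ℝ) :
    gg gams lams mus r x ≤ |x + lams - mus| + gams * Real.sqrt r := by
  unfold gg
  have h0 : 0 ≤ |x + lams - mus| + gams * Real.sqrt r := by positivity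
  have hs2 : Real.sqrt r ^ 2 = r := Real.sq_sqrt hr
  have key : (x + lams - mus) ^ 2 + gams ^ 2 * r ≤ (|x + lams - mus| + gams * Real.sqrt r) ^ 2 := by
    have h1 : |x + lams - mus| ^ 2 = (x + lams - mus) ^ 2 := sq_abs _
    nlinarith [mul_nonneg (abs_nonneg (x + lams - mus)) (mul_nonneg hgams.le (Real.sqrt_nonneg r))]
  calc Real.sqrt ((x + lams - mus) ^ 2 + gams ^ 2 * r)
      ≤ Real.sqrt ((|x + lams - mus| + gams * Real.sqrt r) ^ 2) := Real.sqrt_le_sqrt key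
    _ = |x + lams - mus| + gams * Real.sqrt r := Real.sqrt_sq h0

noncomputable def LLfun (v : ℝ) : ℝ := if v = 0 then 1 else Real.log (1 + v) / v

lemma LLfun_mul (v : ℝ) : Real.log (1 + v) = LLfun v * v := by
  unfold LLfun
  by_cases h : v = 0
  · simp [h]
  · rw [if_neg h]; field_simp

lemma LLfun_bound {v : ℝ} (hv : |v| ≤ 1/2) : |LLfun v - 1| ≤ 2 * |v| := by
  unfold LLfun
  by_cases h : v = 0
  · simp [h]
  · rw [if_neg h]
    have hab := abs_le.1 hv
    have h1 : -1 < v := by linarith [hab.1]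
    have h1' : (1:ℝ)/2 ≤ 1 + v := by linarith [hab.1]
    have h2 := abs_log_one_add_sub h1
    have hv0 : 0 < |v| := abs_pos.2 h
    have h3 : Real.log (1+v)/v - 1 = (Real.log (1+v) - v)/v := by field_simp
    rw [h3, abs_div, div_le_iff₀ hv0]
    calc |Real.log (1+v) - v| ≤ v^2/(1+v) := h2
      _ ≤ 2 * |v| * |v| := by
          rw [← sq_abs, div_le_iff₀ (by linarith : (0:ℝ) < 1 + v)]
          nlinarith [mul_nonneg (mul_nonneg (abs_nonneg v) (abs_nonneg v)) (by linarith [hab.1] : (0:ℝ) ≤ 1 + 2*v)]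

private lemma slope_prod_eq {c Lv w y d : ℝ} (hy : y ≠ 0) (hd : d ≠ 0) :
    c * (Lv * (w / d) * y⁻¹) = c * (Lv * (w / y)) / d := by
  simp only [div_eq_mul_inv]
  ring

/-- inter-band magnetization density as derivative of the pressure:
if `F` has a unique maximizer `rb` over `[0,∞)`, then `t ↦ p(t)` (varying `η`) is
differentiable at `η` with derivative `M`. -/
theorem pressure_deriv_eta (beta gams lams lamf lam mus muf hs hf eta : ℝ) (hbeta : 0 < beta) (hgams : 0 < gams) (hlams : 0 ≤ lams) (hlamf : 0 ≤ lamf) (hlam : 0 ≤ lam)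
    (rb : ℝ) (hrb : 0 ≤ rb) (hmax : ∀ r' : ℝ, 0 ≤ r' → FF beta gams lams lamf lam mus muf hs hf eta r' ≤ FF beta gams lams lamf lam mus muf hs hf eta rb)
    (huniq : ∀ r : ℝ, 0 ≤ r → (∀ r' : ℝ, 0 ≤ r' → FF beta gams lams lamf lam mus muf hs hf eta r' ≤ FF beta gams lams lamf lam mus muf hs hf eta r) → r = rb) :
    HasDerivAt (fun t => pp beta gams lams lamf lam mus muf hs hf t)
      (Real.exp (-(2 * beta * lam)) * (ff beta gams lams lamf lam mus muf hs hf eta rb)⁻¹ *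
        (Real.exp (-(beta * hs)) * Real.sinh (beta * (eta - hf))
          + Real.exp (beta * hs) * Real.sinh (beta * (eta + hf)))) eta := by
  set A : ℝ → ℝ := AA beta gams lams lamf lam mus muf hs hf with hAdef
  set B : ℝ → ℝ := BB beta lam hs hf with hBdef
  set F : ℝ → ℝ → ℝ := fun t r => -(gams * r) + beta⁻¹ * Real.log (A r + B t) with hFdef
  have hFFeq : ∀ t r, FF beta gams lams lamf lam mus muf hs hf t r = F t r := by
    intro t r
    rw [hFdef, FF, ff_eq_AB]
  set c0 : ℝ := (Real.exp (-(beta * muf)) + Real.exp (-(beta * (4 * lam + 2 * lamf - muf))))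
      * Real.cosh (beta * hs) with hc0def
  have hc0 : 0 < c0 := by
    exact mul_pos (by positivity) (Real.cosh_pos _)
  have hA : ∀ r, c0 ≤ A r := fun r => AA_ge beta gams lams lamf lam mus muf hs hf r
  have hB : ∀ t, 0 < B t := fun t => BB_pos beta lam hs hf t
  have hABc0 : ∀ t r, c0 ≤ A r + B t := fun t r => (hA r).trans (le_add_of_nonneg_right (hB t).le)
  have hABpos : ∀ t r, 0 < A r + B t := fun t r => lt_of_lt_of_le hc0 (hABc0 t r)
  have hAcont : Continuous A := AA_continuous beta gams lams lamf lam mus muf hs hf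
  have hBderiv : ∀ t, HasDerivAt B (BD beta lam hs hf t) t := fun t => BB_hasDerivAt beta lam hs hf t
  have hBcont : Continuous B := by
    rw [continuous_iff_continuousAt]; exact fun t => (hBderiv t).continuousAt
  -- uniform bound on B for |t - eta| ≤ 1
  set cb : ℝ := Real.exp (-(beta * (2 * lam - hs))) * Real.exp (beta * (|eta| + 1 + |hf|))
      + Real.exp (-(beta * (2 * lam + hs))) * Real.exp (beta * (|eta| + 1 + |hf|)) with hcbdef
  have hcb0 : 0 < cb := by positivity
  have hBle : ∀ t, |t - eta| ≤ 1 → B t ≤ cb := by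
    intro t ht
    have htabs : |t| ≤ |eta| + 1 := by
      have := abs_sub_abs_le_abs_sub t eta
      linarith
    have key : ∀ s : ℝ, |s| ≤ |hf| → Real.cosh (beta * (t + s)) ≤ Real.exp (beta * (|eta| + 1 + |hf|)) := by
      intro s hsb
      calc Real.cosh (beta * (t + s)) ≤ Real.exp |beta * (t + s)| := cosh_le_exp_abs _
        _ ≤ Real.exp (beta * (|eta| + 1 + |hf|)) := by
            apply Real.exp_le_exp.2
            rw [abs_mul, abs_of_pos hbeta]
            have : |t + s| ≤ |eta| + 1 + |hf| := by
              have := abs_add_le t s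
              linarith
            exact mul_le_mul_of_nonneg_left this hbeta.le
    have k1 := key hf (le_refl _)
    have k2 := key (-hf) (by rw [abs_neg])
    rw [hBdef, BB, hcbdef]
    have e1 := (Real.exp_pos (-(beta * (2 * lam - hs)))).le
    have e2 := (Real.exp_pos (-(beta * (2 * lam + hs)))).le
    have := mul_le_mul_of_nonneg_left k1 e1
    have := mul_le_mul_of_nonneg_left k2 e2
    rw [show t - hf = t + -hf by ring]
    linarith
  -- exponential upper bound on A + B
  set ca : ℝ := c0 + Real.exp (-(beta * (lams + muf))) * Real.exp (beta * |0 + lams - mus|)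
      + Real.exp (-(beta * (4 * lam + lams + 2 * lamf - muf))) * Real.exp (beta * |4 * lam + lams - mus|)
      + 2 * Real.exp (-(beta * (2 * lam + lams))) * Real.cosh (beta * hf) * Real.exp (beta * |2 * lam + lams - mus|)
      + cb with hcadef
  have hca0 : 0 < ca := by
    have l1 : 0 < Real.exp (-(beta * (lams + muf))) * Real.exp (beta * |0 + lams - mus|) := by positivity
    have l2 : 0 < Real.exp (-(beta * (4 * lam + lams + 2 * lamf - muf))) * Real.exp (beta * |4 * lam + lams - mus|) := by positivity
    have l3 : 0 < 2 * Real.exp (-(beta * (2 * lam + lams))) * Real.cosh (beta * hf) * Real.exp (beta * |2 * lam + lams - mus|) :=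
      mul_pos (mul_pos (mul_pos two_pos (Real.exp_pos _)) (Real.cosh_pos _)) (Real.exp_pos _)
    rw [hcadef]
    linarith
  have hterm : ∀ c x : ℝ, 0 ≤ c → ∀ r : ℝ, 0 ≤ r →
      c * Real.cosh (beta * gg gams lams mus r x)
        ≤ c * Real.exp (beta * |x + lams - mus|) * Real.exp (beta * (gams * Real.sqrt r)) := by
    intro c x hc r hr
    have hg0 : 0 ≤ gg gams lams mus r x := Real.sqrt_nonneg _
    have h1 : Real.cosh (beta * gg gams lams mus r x) ≤ Real.exp (beta * gg gams lams mus r x) := by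
      have := cosh_le_exp_abs (beta * gg gams lams mus r x)
      rwa [abs_of_nonneg (by positivity)] at this
    have h2 : beta * gg gams lams mus r x ≤ beta * (|x + lams - mus| + gams * Real.sqrt r) :=
      mul_le_mul_of_nonneg_left (gg_le gams lams mus hgams hr x) hbeta.le
    calc c * Real.cosh (beta * gg gams lams mus r x)
        ≤ c * Real.exp (beta * gg gams lams mus r x) := mul_le_mul_of_nonneg_left h1 hc
      _ ≤ c * Real.exp (beta * (|x + lams - mus| + gams * Real.sqrt r)) :=
          mul_le_mul_of_nonneg_left (Real.exp_le_exp.2 h2) hc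
      _ = c * Real.exp (beta * |x + lams - mus|) * Real.exp (beta * (gams * Real.sqrt r)) := by
          rw [mul_add, Real.exp_add, mul_assoc]
  have hABle : ∀ t r, |t - eta| ≤ 1 → 0 ≤ r →
      A r + B t ≤ ca * Real.exp (beta * (gams * Real.sqrt r)) := by
    intro t r ht hr
    have he1 : (1:ℝ) ≤ Real.exp (beta * (gams * Real.sqrt r)) := Real.one_le_exp (by positivity)
    have h1 := hterm (Real.exp (-(beta * (lams + muf)))) 0 (Real.exp_pos _).le r hr
    have h2 := hterm (Real.exp (-(beta * (4 * lam + lams + 2 * lamf - muf)))) (4 * lam) (Real.exp_pos _).le r hr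
    have h3 := hterm (2 * Real.exp (-(beta * (2 * lam + lams))) * Real.cosh (beta * hf)) (2 * lam)
      (mul_pos (mul_pos two_pos (Real.exp_pos _)) (Real.cosh_pos _)).le r hr
    have h4 : B t ≤ cb * Real.exp (beta * (gams * Real.sqrt r)) :=
      (hBle t ht).trans (le_mul_of_one_le_right hcb0.le he1)
    have h5 : c0 ≤ c0 * Real.exp (beta * (gams * Real.sqrt r)) := le_mul_of_one_le_right hc0.le he1
    have hexp : ca * Real.exp (beta * (gams * Real.sqrt r))
        = c0 * Real.exp (beta * (gams * Real.sqrt r))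
        + Real.exp (-(beta * (lams + muf))) * Real.exp (beta * |0 + lams - mus|) * Real.exp (beta * (gams * Real.sqrt r))
        + Real.exp (-(beta * (4 * lam + lams + 2 * lamf - muf))) * Real.exp (beta * |4 * lam + lams - mus|) * Real.exp (beta * (gams * Real.sqrt r))
        + 2 * Real.exp (-(beta * (2 * lam + lams))) * Real.cosh (beta * hf) * Real.exp (beta * |2 * lam + lams - mus|) * Real.exp (beta * (gams * Real.sqrt r))
        + cb * Real.exp (beta * (gams * Real.sqrt r)) := by rw [hcadef]; ring
    rw [hexp, hAdef, AA]
    rw [hc0def] at h5 ⊢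
    linarith
  -- tail bound for F
  set L0 : ℝ := beta⁻¹ * Real.log c0 with hL0def
  have hF0 : ∀ t, L0 ≤ F t 0 := by
    intro t
    have h1 : Real.log c0 ≤ Real.log (A 0 + B t) := Real.log_le_log hc0 (hABc0 t 0)
    have h2 : beta⁻¹ * Real.log c0 ≤ beta⁻¹ * Real.log (A 0 + B t) :=
      mul_le_mul_of_nonneg_left h1 (inv_nonneg.2 hbeta.le)
    have h3 : F t 0 = beta⁻¹ * Real.log (A 0 + B t) := by
      rw [hFdef]; simp
    rw [h3, hL0def]; exact h2
  set R : ℝ := max 4 (2 * (beta⁻¹ * Real.log ca - L0 + 1) / gams) with hRdef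
  have hR4 : (4:ℝ) ≤ R := le_max_left _ _
  have hR0 : (0:ℝ) ≤ R := by linarith
  have htail : ∀ t r, |t - eta| ≤ 1 → R < r → F t r ≤ L0 - 1 := by
    intro t r ht hRr
    have hr0 : (0:ℝ) ≤ r := le_trans hR0 hRr.le
    have h1 : F t r ≤ -(gams * r) + beta⁻¹ * (Real.log ca + beta * (gams * Real.sqrt r)) := by
      have hle := hABle t r ht hr0
      have hlog : Real.log (A r + B t) ≤ Real.log ca + beta * (gams * Real.sqrt r) := by
        calc Real.log (A r + B t) ≤ Real.log (ca * Real.exp (beta * (gams * Real.sqrt r))) :=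
              Real.log_le_log (hABpos t r) hle
          _ = Real.log ca + beta * (gams * Real.sqrt r) := by
              rw [Real.log_mul hca0.ne' (Real.exp_pos _).ne', Real.log_exp]
      have := mul_le_mul_of_nonneg_left hlog (inv_nonneg.2 hbeta.le)
      rw [hFdef]
      simp only
      linarith
    have h2 : beta⁻¹ * (Real.log ca + beta * (gams * Real.sqrt r))
        = beta⁻¹ * Real.log ca + gams * Real.sqrt r := by
      field_simp
    have hsr : (2:ℝ) ≤ Real.sqrt r := by
      have : (4:ℝ) ≤ r := le_trans hR4 hRr.le
      have h4 := Real.sqrt_le_sqrt this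
      rwa [show Real.sqrt 4 = 2 by
        rw [show (4:ℝ) = 2^2 by norm_num, Real.sqrt_sq (by norm_num : (0:ℝ) ≤ 2)]] at h4
    have hsq : Real.sqrt r ^ 2 = r := Real.sq_sqrt hr0
    have hss : Real.sqrt r * Real.sqrt r = r := Real.mul_self_sqrt hr0
    have h2s : 2 * Real.sqrt r ≤ r := by
      nlinarith [mul_nonneg (Real.sqrt_nonneg r) (by linarith : (0:ℝ) ≤ Real.sqrt r - 2)]
    have h3 : gams * Real.sqrt r - gams * r ≤ -(gams * r) / 2 := by
      have := mul_le_mul_of_nonneg_left h2s hgams.le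
      linarith
    have h4 : 2 * (beta⁻¹ * Real.log ca - L0 + 1) / gams ≤ R := le_max_right _ _
    have h5 : 2 * (beta⁻¹ * Real.log ca - L0 + 1) ≤ gams * R := by
      rw [div_le_iff₀ hgams] at h4
      linarith
    have h6 : gams * R ≤ gams * r := mul_le_mul_of_nonneg_left hRr.le hgams.le
    rw [h2] at h1
    have hL5 : beta⁻¹ * Real.log ca - L0 + 1 ≤ gams * r / 2 := by linarith
    have hfin : F t r ≤ beta⁻¹ * Real.log ca - gams * r / 2 := by linarith
    calc F t r ≤ beta⁻¹ * Real.log ca - gams * r / 2 := hfin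
      _ ≤ beta⁻¹ * Real.log ca - (beta⁻¹ * Real.log ca - L0 + 1) := by linarith only [hL5]
      _ = L0 - 1 := by ring
  -- continuity of F t
  have hFcont : ∀ t, Continuous (fun r => F t r) := by
    intro t
    rw [hFdef]
    have h1 : Continuous (fun r => A r + B t) := hAcont.add continuous_const
    exact ((continuous_const.mul continuous_id).neg).add
      (continuous_const.mul (h1.log fun r => (hABpos t r).ne'))
  -- maximizer over [0, R]
  have hex : ∀ t : ℝ, ∃ r, r ∈ Set.Icc 0 R ∧ ∀ r' ∈ Set.Icc 0 R, F t r' ≤ F t r := by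
    intro t
    obtain ⟨r, hrmem, hrmax⟩ := isCompact_Icc.exists_isMaxOn (Set.nonempty_Icc.2 hR0)
      (hFcont t).continuousOn
    exact ⟨r, hrmem, fun r' hr' => hrmax hr'⟩
  choose rt hrtmem hrtmax using hex
  have hglob : ∀ t, |t - eta| ≤ 1 → ∀ r, 0 ≤ r → F t r ≤ F t (rt t) := by
    intro t ht r hr
    rcases le_or_gt r R with h | h
    · exact hrtmax t r ⟨hr, h⟩
    · have h1 := htail t r ht h
      have h2 := hF0 t
      have h3 : F t 0 ≤ F t (rt t) := hrtmax t 0 ⟨le_refl 0, hR0⟩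
      linarith
  have hmax' : ∀ r, 0 ≤ r → F eta r ≤ F eta rb := by
    intro r hr
    have := hmax r hr
    rwa [hFFeq, hFFeq] at this
  have heta1 : |eta - eta| ≤ (1:ℝ) := by simp
  have hrbR : rb ≤ R := by
    by_contra h
    push_neg at h
    have h1 := htail eta rb heta1 h
    have h2 := hF0 eta
    have h3 := hmax' 0 le_rfl
    linarith
  -- value of the sup
  have hPeq : ∀ t, |t - eta| ≤ 1 → sSup (F t '' Set.Ici 0) = F t (rt t) := by
    intro t ht
    apply IsGreatest.csSup_eq
    constructor
    · exact Set.mem_image_of_mem _ (hrtmem t).1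
    · rintro y ⟨r, hr, rfl⟩
      exact hglob t ht r hr
  have hPeta : sSup (F eta '' Set.Ici 0) = F eta rb := by
    apply IsGreatest.csSup_eq
    constructor
    · exact Set.mem_image_of_mem _ hrb
    · rintro y ⟨r, hr, rfl⟩
      exact hmax' r hr
  -- uniform bound on |F t r - F eta r|
  set eps : ℝ → ℝ := fun t => beta⁻¹ * |B t - B eta| / c0 with hepsdef
  have heps0 : ∀ t, 0 ≤ eps t := by
    intro t; rw [hepsdef]; positivity
  have hFdiffB : ∀ t r, |F t r - F eta r| ≤ eps t := by
    intro t r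
    have h1 := abs_log_sub_log_le hc0 (hABc0 t r) (hABc0 eta r)
    have h2 : A r + B t - (A r + B eta) = B t - B eta := by ring
    rw [h2] at h1
    have h3 : F t r - F eta r = beta⁻¹ * (Real.log (A r + B t) - Real.log (A r + B eta)) := by
      rw [hFdef]; ring
    rw [h3, abs_mul, abs_of_nonneg (inv_nonneg.2 hbeta.le), hepsdef]
    simp only
    rw [mul_div_assoc]
    exact mul_le_mul_of_nonneg_left h1 (inv_nonneg.2 hbeta.le)
  -- convergence of the maximizer
  have hepslim : Tendsto (fun t => 2 * eps t) (𝓝 eta) (𝓝 0) := by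
    have h1 : Tendsto (fun t => B t - B eta) (𝓝 eta) (𝓝 0) := by
      have := (hBcont.tendsto eta).sub (tendsto_const_nhds (α := ℝ) (x := B eta))
      simpa using this
    have h2 := ((h1.abs.const_mul beta⁻¹).div_const c0).const_mul 2
    simpa using h2
  have htendrt : Tendsto rt (𝓝[≠] eta) (𝓝 rb) := by
    rw [Metric.tendsto_nhds]
    intro ep hep
    obtain ⟨d, hd, hball⟩ : ∃ d, 0 < d ∧ ∀ t, |t - eta| ≤ 1 → 2 * eps t < d → dist (rt t) rb < ep := by
      by_cases hK : (Set.Icc 0 R ∩ (Metric.ball rb ep)ᶜ).Nonempty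
      · obtain ⟨rs, hrsmem, hrsmax⟩ :=
          (isCompact_Icc.inter_right Metric.isOpen_ball.isClosed_compl).exists_isMaxOn hK
            (hFcont eta).continuousOn
        have hrs0 : 0 ≤ rs := hrsmem.1.1
        have h1 : F eta rs ≤ F eta rb := hmax' rs hrs0
        have hne : rs ≠ rb := by
          intro h
          have : rb ∈ (Metric.ball rb ep)ᶜ := h ▸ hrsmem.2
          exact this (Metric.mem_ball_self hep)
        have h2 : F eta rs ≠ F eta rb := by
          intro h
          apply hne
          apply huniq rs hrs0
          intro r' hr'
          rw [hFFeq, hFFeq, h]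
          exact hmax' r' hr'
        refine ⟨F eta rb - F eta rs, sub_pos.2 (lt_of_le_of_ne h1 h2), ?_⟩
        intro t ht hlt
        by_contra hdist
        push_neg at hdist
        have hmem2 : rt t ∈ Set.Icc 0 R ∩ (Metric.ball rb ep)ᶜ :=
          ⟨hrtmem t, by simpa [Metric.mem_ball, not_lt] using hdist⟩
        have h3 : F eta (rt t) ≤ F eta rs := hrsmax hmem2
        have h4 := abs_le.1 (hFdiffB t (rt t))
        have h5 := abs_le.1 (hFdiffB t rb)
        have h6 : F t rb ≤ F t (rt t) := hglob t ht rb hrb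
        linarith [h4.1, h4.2, h5.1, h5.2]
      · refine ⟨1, one_pos, ?_⟩
        intro t ht _
        have : rt t ∈ Metric.ball rb ep := by
          by_contra h
          exact hK ⟨rt t, hrtmem t, h⟩
        simpa [Metric.mem_ball] using this
    have h8 : ∀ᶠ t in 𝓝 eta, 2 * eps t < d := hepslim.eventually_lt_const hd
    have h9 : ∀ᶠ t in 𝓝 eta, |t - eta| ≤ 1 :=
      (eventually_abs_sub_lt eta one_pos).mono fun t h => h.le
    exact eventually_nhdsWithin_of_eventually_nhds
      ((h9.and h8).mono fun t ⟨a, b⟩ => hball t a b)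
  -- derivative of t ↦ F t rb
  have hy0 : 0 < A rb + B eta := hABpos eta rb
  have hd1 : HasDerivAt (fun t => A rb + B t) (BD beta lam hs hf eta) eta :=
    (hBderiv eta).const_add (A rb)
  have hd2 : HasDerivAt (fun t => Real.log (A rb + B t))
      (BD beta lam hs hf eta / (A rb + B eta)) eta := hd1.log hy0.ne'
  have hd4 : HasDerivAt (fun t => F t rb)
      (beta⁻¹ * (BD beta lam hs hf eta / (A rb + B eta))) eta := by
    have hd3 := (hd2.const_mul beta⁻¹).const_add (-(gams * rb))
    have heqf : (fun t => -(gams * rb) + beta⁻¹ * Real.log (A rb + B t)) = fun t => F t rb := by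
      funext t; rw [hFdef]
    rwa [heqf] at hd3
  set D0 : ℝ := beta⁻¹ * (BD beta lam hs hf eta / (A rb + B eta)) with hD0def
  have hffy : ff beta gams lams lamf lam mus muf hs hf eta rb = A rb + B eta := by
    rw [ff_eq_AB, hAdef, hBdef]
  have hMeq : D0
      = Real.exp (-(2 * beta * lam)) * (ff beta gams lams lamf lam mus muf hs hf eta rb)⁻¹ *
        (Real.exp (-(beta * hs)) * Real.sinh (beta * (eta - hf))
          + Real.exp (beta * hs) * Real.sinh (beta * (eta + hf))) := by
    rw [hD0def, hffy, BD]
    have he1 : Real.exp (-(beta * (2 * lam - hs)))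
        = Real.exp (-(2 * beta * lam)) * Real.exp (beta * hs) := by
      rw [← Real.exp_add]; congr 1; ring
    have he2 : Real.exp (-(beta * (2 * lam + hs)))
        = Real.exp (-(2 * beta * lam)) * Real.exp (-(beta * hs)) := by
      rw [← Real.exp_add]; congr 1; ring
    rw [he1, he2]
    field_simp
    ring
  -- limits along 𝓝[≠] eta
  have hs1T : Tendsto (fun t => (F t rb - F eta rb) / (t - eta)) (𝓝[≠] eta) (𝓝 D0) := by
    have h := hasDerivAt_iff_tendsto_slope.1 hd4
    apply h.congr
    intro t
    rw [slope_def_field]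
  have hyT : Tendsto (fun t => A (rt t) + B eta) (𝓝[≠] eta) (𝓝 (A rb + B eta)) :=
    ((hAcont.tendsto rb).comp htendrt).add tendsto_const_nhds
  have hBT : Tendsto (fun t => B t) (𝓝[≠] eta) (𝓝 (B eta)) :=
    (hBcont.tendsto eta).mono_left nhdsWithin_le_nhds
  have huT : Tendsto (fun t => (B t - B eta) / (A (rt t) + B eta)) (𝓝[≠] eta) (𝓝 0) := by
    have h := (hBT.sub (tendsto_const_nhds (x := B eta))).div hyT hy0.ne'
    rwa [sub_self, zero_div] at h
  have hu_half : ∀ᶠ t in 𝓝[≠] eta, |(B t - B eta) / (A (rt t) + B eta)| ≤ 1/2 := by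
    have h := huT.abs
    simp only [abs_zero] at h
    exact (h.eventually_lt_const (by norm_num : (0:ℝ) < 1/2)).mono fun t ht => ht.le
  have hLuT : Tendsto (fun t => LLfun ((B t - B eta) / (A (rt t) + B eta))) (𝓝[≠] eta) (𝓝 1) := by
    rw [tendsto_iff_dist_tendsto_zero]
    have hft : ∀ᶠ t in 𝓝[≠] eta,
        dist (LLfun ((B t - B eta) / (A (rt t) + B eta))) 1
          ≤ 2 * |(B t - B eta) / (A (rt t) + B eta)| :=
      hu_half.mono fun t h => by rw [Real.dist_eq]; exact LLfun_bound h
    have hg0 : Tendsto (fun t => 2 * |(B t - B eta) / (A (rt t) + B eta)|) (𝓝[≠] eta) (𝓝 0) := by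
      have h := huT.abs.const_mul 2
      simpa using h
    exact squeeze_zero' (Eventually.of_forall fun t => dist_nonneg) hft hg0
  have hslopeB : Tendsto (fun t => (B t - B eta) / (t - eta)) (𝓝[≠] eta)
      (𝓝 (BD beta lam hs hf eta)) := by
    have h := hasDerivAt_iff_tendsto_slope.1 (hBderiv eta)
    apply h.congr
    intro t
    rw [slope_def_field]
  have hs2T : Tendsto (fun t => (F t (rt t) - F eta (rt t)) / (t - eta)) (𝓝[≠] eta) (𝓝 D0) := by
    have hmain : Tendsto (fun t => beta⁻¹ * (LLfun ((B t - B eta) / (A (rt t) + B eta))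
        * ((B t - B eta) / (t - eta)) * (A (rt t) + B eta)⁻¹)) (𝓝[≠] eta)
        (𝓝 (beta⁻¹ * (1 * BD beta lam hs hf eta * (A rb + B eta)⁻¹))) :=
      ((hLuT.mul hslopeB).mul (hyT.inv₀ hy0.ne')).const_mul beta⁻¹
    rw [show beta⁻¹ * (1 * BD beta lam hs hf eta * (A rb + B eta)⁻¹) = D0 by
      rw [hD0def, one_mul, div_eq_mul_inv]] at hmain
    apply hmain.congr'
    filter_upwards [self_mem_nhdsWithin] with t htne
    have htne' : t - eta ≠ 0 := sub_ne_zero.2 htne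
    have hyt : 0 < A (rt t) + B eta := hABpos eta (rt t)
    have hxt : 0 < A (rt t) + B t := hABpos t (rt t)
    have hFd : F t (rt t) - F eta (rt t)
        = beta⁻¹ * (Real.log (A (rt t) + B t) - Real.log (A (rt t) + B eta)) := by
      rw [hFdef]; ring
    have h1u : 1 + (B t - B eta) / (A (rt t) + B eta) = (A (rt t) + B t) / (A (rt t) + B eta) := by
      rw [one_add_div hyt.ne', show A (rt t) + B eta + (B t - B eta) = A (rt t) + B t by ring]
    have hlog : Real.log (A (rt t) + B t) - Real.log (A (rt t) + B eta)
        = Real.log (1 + (B t - B eta) / (A (rt t) + B eta)) := by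
      rw [h1u, Real.log_div hxt.ne' hyt.ne']
    rw [hFd, hlog, LLfun_mul]
    exact slope_prod_eq hyt.ne' htne' 
  -- squeeze for the sup
  have key : ∀ x1 x2 x3 : ℝ, (x1 ≤ x2 ∧ x2 ≤ x3) ∨ (x3 ≤ x2 ∧ x2 ≤ x1) →
      |x2 - D0| ≤ |x1 - D0| + |x3 - D0| := by
    intro x1 x2 x3 h
    rcases h with ⟨h1, h2⟩ | ⟨h1, h2⟩ <;> rw [abs_le] <;> constructor <;>
      linarith [le_abs_self (x1 - D0), neg_abs_le (x1 - D0), le_abs_self (x3 - D0),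
        neg_abs_le (x3 - D0), abs_nonneg (x1 - D0), abs_nonneg (x3 - D0)]
  have hPs : Tendsto (fun t => (sSup (F t '' Set.Ici 0) - sSup (F eta '' Set.Ici 0)) / (t - eta))
      (𝓝[≠] eta) (𝓝 D0) := by
    rw [tendsto_iff_dist_tendsto_zero]
    have h9 : ∀ᶠ t in 𝓝 eta, |t - eta| ≤ 1 :=
      (eventually_abs_sub_lt eta one_pos).mono fun t h => h.le
    have hbnd : ∀ᶠ t in 𝓝[≠] eta,
        dist ((sSup (F t '' Set.Ici 0) - sSup (F eta '' Set.Ici 0)) / (t - eta)) D0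
          ≤ dist ((F t rb - F eta rb) / (t - eta)) D0
            + dist ((F t (rt t) - F eta (rt t)) / (t - eta)) D0 := by
      filter_upwards [eventually_nhdsWithin_of_eventually_nhds h9, self_mem_nhdsWithin]
        with t ht htne
      have htne' : t ≠ eta := htne
      rw [hPeq t ht, hPeta]
      have hlow : F t rb - F eta rb ≤ F t (rt t) - F eta rb := by
        have := hglob t ht rb hrb; linarith
      have hup : F t (rt t) - F eta rb ≤ F t (rt t) - F eta (rt t) := by
        have := hmax' (rt t) (hrtmem t).1; linarith
      simp only [Real.dist_eq]
      apply key
      rcases lt_or_gt_of_ne htne' with hc | hc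
      · right
        have hneg : eta - t > 0 := by linarith
        have hrw : ∀ x : ℝ, x / (t - eta) = -x / (eta - t) := by
          intro x
          rw [show t - eta = -(eta - t) by ring, div_neg, neg_div]
        rw [hrw, hrw, hrw]
        constructor
        · gcongr <;> linarith
        · gcongr <;> linarith
      · left
        have hpos : t - eta > 0 := by linarith
        constructor
        · gcongr <;> linarith
        · gcongr <;> linarith
    apply squeeze_zero' (Eventually.of_forall fun t => dist_nonneg) hbnd
    have d1 := tendsto_iff_dist_tendsto_zero.1 hs1T
    have d2 := tendsto_iff_dist_tendsto_zero.1 hs2T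
    exact (by norm_num : (0:ℝ) + 0 = 0) ▸ d1.add d2
  -- conclude
  rw [← hMeq, hasDerivAt_iff_tendsto_slope]
  apply hPs.congr
  intro t
  rw [slope_def_field]
  simp only [pp]
  have himg : ∀ s : ℝ, ((fun r => FF beta gams lams lamf lam mus muf hs hf s r) '' Set.Ici 0)
      = (F s '' Set.Ici 0) := by
    intro s
    have he : (fun r => FF beta gams lams lamf lam mus muf hs hf s r) = F s :=
      funext fun r => hFFeq s r
    rw [he]
  rw [himg, himg]
  ring
end
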